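/- arXiv:2604.14937 — 3 statements merged into one kernel-verified Lean document; each statement's English description precedes it below -/
import Mathlib

section
/- There exists a unique ℂ-linear map S : 𝒜 → 𝒜 such that S(1) = 1, S(α) = α*, S(α*) = α, S(γ) = −conj(q)·γ, S(γ*) = −q⁻¹·γ*, S maps 𝒜_p into 𝒜_p for every p ∈ ℤ, and S(ab) = ζ^{−pr}·S(b)S(a) whenever a ∈ 𝒜_p and b ∈ 𝒜_r (p, r ∈ ℤ). -/
open scoped TensorProduct

noncomputable section

/-- The monomial family `α^n γ^m (γ*)^k` (for `n ≥ 0`) resp. `(α*)^{-n} γ^m (γ*)^k`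
(for `n < 0`), indexed by `(n, m, k) ∈ ℤ × ℕ × ℕ`. -/
def suqMono {A : Type*} [Ring A] [StarRing A] (a g : A) (i : ℤ × ℕ × ℕ) : A :=
  (if 0 ≤ i.1 then a ^ i.1.toNat else (star a) ^ (-i.1).toNat) * g ^ i.2.1 * (star g) ^ i.2.2

/-- The degree-`p` homogeneous component `𝒜_p`: the `ℂ`-span of the basis monomials with
`m - k = p`. -/
def suqHomog {A : Type*} [Ring A] [Algebra ℂ A] [StarRing A] (a g : A) (p : ℤ) :
    Submodule ℂ A :=
  Submodule.span ℂ
    {x | ∃ i : ℤ × ℕ × ℕ, (i.2.1 : ℤ) - (i.2.2 : ℤ) = p ∧ x = suqMono a g i}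

/-- The defining relations of `Pol(SU_q(2))`. -/
def SUqRel {A : Type*} [Ring A] [Algebra ℂ A] [StarRing A] (q : ℂ) (a g : A) : Prop :=
  star a * a + star g * g = 1 ∧
  a * star a + ((‖q‖ : ℂ) ^ 2) • (star g * g) = 1 ∧
  g * star g = star g * g ∧
  a * g = (starRingEnd ℂ q) • (g * a) ∧
  a * star g = q • (star g * a)

/-- The monomials form a `ℂ`-basis. -/
def SUqBasis {A : Type*} [Ring A] [Algebra ℂ A] [StarRing A] (a g : A) : Prop :=
  LinearIndependent ℂ (suqMono a g) ∧
  Submodule.span ℂ (Set.range (suqMono a g)) = ⊤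

/-- The characterizing properties of the antipode `S`. -/
def SUqAntipode {A : Type*} [Ring A] [Algebra ℂ A] [StarRing A] (q : ℂ) (a g : A)
    (S : A →ₗ[ℂ] A) : Prop :=
  S 1 = 1 ∧ S a = star a ∧ S (star a) = a ∧
  S g = (-(starRingEnd ℂ q)) • g ∧ S (star g) = (-q⁻¹) • star g ∧
  (∀ p : ℤ, ∀ x ∈ suqHomog a g p, S x ∈ suqHomog a g p) ∧
  (∀ p r : ℤ, ∀ x ∈ suqHomog a g p, ∀ y ∈ suqHomog a g r,
    S (x * y) = ((q / starRingEnd ℂ q) ^ (-(p * r))) • (S y * S x))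

/-- The braided multiplication on `𝒜 ⊗ 𝒜`. -/
def SUqBraidedMul {A : Type*} [Ring A] [Algebra ℂ A] [StarRing A] (q : ℂ) (a g : A)
    (μ : A ⊗[ℂ] A →ₗ[ℂ] A ⊗[ℂ] A →ₗ[ℂ] A ⊗[ℂ] A) : Prop :=
  ∀ (x w : A) (r s : ℤ), ∀ y ∈ suqHomog a g r, ∀ z ∈ suqHomog a g s,
    μ (x ⊗ₜ[ℂ] y) (z ⊗ₜ[ℂ] w)
      = ((q / starRingEnd ℂ q) ^ (-(r * s))) • ((x * z) ⊗ₜ[ℂ] (y * w))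

/-- The characterizing properties of the comultiplication `Δ` (as a unital algebra
homomorphism into the braided tensor square with multiplication `μ`). -/
def SUqComul {A : Type*} [Ring A] [Algebra ℂ A] [StarRing A] (q : ℂ) (a g : A)
    (μ : A ⊗[ℂ] A →ₗ[ℂ] A ⊗[ℂ] A →ₗ[ℂ] A ⊗[ℂ] A) (Δ : A →ₗ[ℂ] A ⊗[ℂ] A) : Prop :=
  Δ 1 = 1 ⊗ₜ[ℂ] 1 ∧ (∀ x y : A, Δ (x * y) = μ (Δ x) (Δ y)) ∧
  Δ a = a ⊗ₜ[ℂ] a - q • ((star g) ⊗ₜ[ℂ] g) ∧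
  Δ g = g ⊗ₜ[ℂ] a + (star a) ⊗ₜ[ℂ] g ∧
  Δ (star a) = (star a) ⊗ₜ[ℂ] (star a) - q • (g ⊗ₜ[ℂ] (star g)) ∧
  Δ (star g) = (star g) ⊗ₜ[ℂ] (star a) + a ⊗ₜ[ℂ] (star g)

/-- The braided flip `c` on `𝒜 ⊗ 𝒜`. -/
def SUqFlip {A : Type*} [Ring A] [Algebra ℂ A] [StarRing A] (q : ℂ) (a g : A)
    (c : A ⊗[ℂ] A →ₗ[ℂ] A ⊗[ℂ] A) : Prop :=
  ∀ (p r : ℤ), ∀ x ∈ suqHomog a g p, ∀ y ∈ suqHomog a g r,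
    c (x ⊗ₜ[ℂ] y) = ((q / starRingEnd ℂ q) ^ (-(p * r))) • (y ⊗ₜ[ℂ] x)

/-- The Haar functional, defined on the basis. -/
def SUqHaar {A : Type*} [Ring A] [Algebra ℂ A] [StarRing A] (q : ℂ) (a g : A)
    (h : A →ₗ[ℂ] ℂ) : Prop :=
  ∀ i : ℤ × ℕ × ℕ, h (suqMono a g i) =
    if i.1 = 0 ∧ i.2.1 = i.2.2
    then (1 - (‖q‖ : ℂ) ^ 2) / (1 - (‖q‖ : ℂ) ^ (2 * (i.2.1 + 1)))
    else 0


set_option linter.unusedSectionVars false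
namespace SUqAux

variable {A : Type*} [Ring A] [Algebra ℂ A] [StarRing A] [StarModule ℂ A]

lemma smul_flip {c : ℂ} (hc : c ≠ 0) {x y : A} (h : x = c • y) : y = c⁻¹ • x := by
  rw [h, smul_smul, inv_mul_cancel₀ hc, one_smul]

lemma pow_mul_scalar {c : ℂ} {x y : A} (h : x * y = c • (y * x)) (n : ℕ) :
    x ^ n * y = c ^ n • (y * x ^ n) := by
  induction n with
  | zero => simp
  | succ n ih =>
    rw [pow_succ, mul_assoc, h, mul_smul_comm, ← mul_assoc, ih, smul_mul_assoc,
      smul_smul, mul_assoc, ← pow_succ, ← pow_succ']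

lemma mul_pow_scalar {c : ℂ} {x y : A} (h : x * y = c • (y * x)) (m : ℕ) :
    x * y ^ m = c ^ m • (y ^ m * x) := by
  induction m with
  | zero => simp
  | succ m ih =>
    rw [pow_succ, ← mul_assoc, ih, smul_mul_assoc, mul_assoc, h, mul_smul_comm,
      smul_smul, ← mul_assoc, ← pow_succ]

/-- triangular numbers, recursively (no division) -/
def Tn : ℕ → ℕ
  | 0 => 0
  | (m+1) => Tn m + m

/-- the `ζ`-exponent in the antipode coefficient -/
def Ee (m k : ℕ) : ℤ := (m : ℤ) * k - Tn m - Tn k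

/-- the antipode coefficient on the basis monomial indexed by `i` -/
def cc (q : ℂ) (i : ℤ × ℕ × ℕ) : ℂ :=
  (-(starRingEnd ℂ q)) ^ i.2.1 * (-q⁻¹) ^ i.2.2 * (q / starRingEnd ℂ q) ^ Ee i.2.1 i.2.2 *
    (starRingEnd ℂ q) ^ (i.1 * i.2.1) * q ^ (i.1 * i.2.2)

section cc
variable {q : ℂ} (hq : q ≠ 0)

include hq

lemma qb_ne : starRingEnd ℂ q ≠ 0 :=
  fun h => hq (by simpa using congrArg (starRingEnd ℂ) h)

lemma zeta_ne : q / starRingEnd ℂ q ≠ 0 := div_ne_zero hq (qb_ne hq)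

lemma cc_I1 (n : ℤ) (m k : ℕ) :
    cc q (n, m+1, k) =
      ((q / starRingEnd ℂ q) ^ ((k : ℤ) - m) * (-(starRingEnd ℂ q)) *
        (starRingEnd ℂ q) ^ n) * cc q (n, m, k) := by
  have hz := zeta_ne hq
  have hb := qb_ne hq
  have hE : Ee (m+1) k = ((k : ℤ) - m) + Ee m k := by
    simp only [Ee, Tn]; push_cast; ring
  have hn : n * ((m : ℤ) + 1) = n + n * m := by ring
  simp only [cc, hE, pow_succ, Nat.cast_add, Nat.cast_one, hn,
    zpow_add₀ hz, zpow_add₀ hb]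
  ring

lemma cc_I2 (n : ℤ) (m k : ℕ) :
    cc q (n, m, k+1) =
      ((q / starRingEnd ℂ q) ^ ((m : ℤ) - k) * (-q⁻¹) * q ^ n) * cc q (n, m, k) := by
  have hz := zeta_ne hq
  have hE : Ee m (k+1) = ((m : ℤ) - k) + Ee m k := by
    simp only [Ee, Tn]; push_cast; ring
  have hn : n * ((k : ℤ) + 1) = n + n * k := by ring
  simp only [cc, hE, pow_succ, Nat.cast_add, Nat.cast_one, hn,
    zpow_add₀ hz, zpow_add₀ hq]
  ring

lemma cc_I3 (n : ℤ) (m k : ℕ) :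
    cc q (n+1, m, k) = ((starRingEnd ℂ q) ^ m * q ^ k) * cc q (n, m, k) := by
  have hb := qb_ne hq
  have hm : (n + 1) * (m : ℤ) = (m : ℤ) + n * m := by ring
  have hk : (n + 1) * (k : ℤ) = (k : ℤ) + n * k := by ring
  simp only [cc, hm, hk, zpow_add₀ hb, zpow_add₀ hq, zpow_natCast]
  ring

lemma cc_I4 (n : ℤ) (m k : ℕ) :
    cc q (n+1, m+1, k+1) =
      ((q * starRingEnd ℂ q) ^ (n+1) * ((starRingEnd ℂ q) ^ m * q ^ k)) * cc q (n, m, k) := by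
  have hz := zeta_ne hq
  have hb := qb_ne hq
  rw [cc_I3 hq, cc_I2 hq, cc_I1 hq]
  have e1 : ((m : ℤ) + 1) - k = ((m:ℤ) - k) + 1 := by ring
  have e2 : ((k : ℤ)) - m = -((m:ℤ) - k) := by ring
  have e3 : (q * starRingEnd ℂ q) ^ (n+1)
      = q * starRingEnd ℂ q * (q ^ n * (starRingEnd ℂ q) ^ n) := by
    rw [mul_zpow, zpow_add₀ hq, zpow_add₀ hb]; simp only [zpow_one]; ring
  rw [Nat.cast_add, Nat.cast_one, e1, zpow_add₀ hz, e2, zpow_neg, zpow_one, e3,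
    pow_succ, pow_succ]
  set w := (q / starRingEnd ℂ q) ^ ((m:ℤ) - k) with hw
  have hwne : w ≠ 0 := zpow_ne_zero _ hz
  field_simp

lemma cc_I4' (n : ℤ) (m k : ℕ) :
    cc q (n, m+1, k+1) = ((q * starRingEnd ℂ q) ^ n) * cc q (n, m, k) := by
  have hz := zeta_ne hq
  have hb := qb_ne hq
  rw [cc_I2 hq, cc_I1 hq]
  have e1 : ((m : ℤ) + 1) - k = ((m:ℤ) - k) + 1 := by ring
  have e2 : ((k : ℤ)) - m = -((m:ℤ) - k) := by ring
  have e3 : (q * starRingEnd ℂ q) ^ n = q ^ n * (starRingEnd ℂ q) ^ n := mul_zpow q _ n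
  rw [Nat.cast_add, Nat.cast_one, e1, zpow_add₀ hz, e2, zpow_neg, zpow_one, e3]
  set w := (q / starRingEnd ℂ q) ^ ((m:ℤ) - k) with hw
  have hwne : w ≠ 0 := zpow_ne_zero _ hz
  field_simp

omit hq in
lemma cc_one : cc q (0, 0, 0) = 1 := by simp [cc, Ee, Tn]
omit hq in
lemma cc_a : cc q (1, 0, 0) = 1 := by simp [cc, Ee, Tn]
omit hq in
omit hq in
lemma cc_as : cc q (-1, 0, 0) = 1 := by simp [cc, Ee, Tn]
omit hq in
lemma cc_g : cc q (0, 1, 0) = -(starRingEnd ℂ q) := by simp [cc, Ee, Tn]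
omit hq in
omit hq in
lemma cc_gs : cc q (0, 0, 1) = -q⁻¹ := by simp [cc, Ee, Tn]

end cc
end SUqAux
namespace SUqAux
variable {A : Type*} [Ring A] [Algebra ℂ A] [StarRing A] [StarModule ℂ A]

/-- `α`-power part of the monomial, for integer exponent. -/
def Apow (a : A) (n : ℤ) : A := if 0 ≤ n then a ^ n.toNat else (star a) ^ (-n).toNat

lemma suqMono_def (a g : A) (n : ℤ) (m k : ℕ) :
    suqMono a g (n, m, k) = Apow a n * (g ^ m * (star g) ^ k) := by
  rw [suqMono, Apow, mul_assoc]

lemma Apow_nonneg (a : A) {n : ℤ} (hn : 0 ≤ n) : Apow a n = a ^ n.toNat := if_pos hn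

lemma Apow_neg' (a : A) {n : ℤ} (hn : n < 0) : Apow a n = (star a) ^ (-n).toNat :=
  if_neg (not_le.mpr hn)

lemma Apow_nonpos (a : A) {n : ℤ} (hn : n ≤ 0) : Apow a n = (star a) ^ (-n).toNat := by
  rcases lt_or_eq_of_le hn with h | h
  · exact Apow_neg' a h
  · subst h; simp [Apow]

lemma Apow_succ (a : A) {n : ℤ} (hn : 0 ≤ n) : Apow a (n + 1) = Apow a n * a := by
  rw [Apow_nonneg a hn, Apow_nonneg a (by omega)]
  have h : (n + 1).toNat = n.toNat + 1 := by omega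
  rw [h, pow_succ]

lemma Apow_succ' (a : A) {n : ℤ} (hn : 0 ≤ n) : Apow a (n + 1) = a * Apow a n := by
  rw [Apow_nonneg a hn, Apow_nonneg a (by omega)]
  have h : (n + 1).toNat = n.toNat + 1 := by omega
  rw [h, pow_succ']

lemma Apow_pred (a : A) {n : ℤ} (hn : n ≤ 0) : Apow a (n - 1) = Apow a n * star a := by
  rw [Apow_nonpos a hn, Apow_nonpos a (by omega : n - 1 ≤ 0)]
  have h : (-(n - 1)).toNat = (-n).toNat + 1 := by omega
  rw [h, pow_succ]

lemma Apow_pred' (a : A) {n : ℤ} (hn : n ≤ 0) : Apow a (n - 1) = star a * Apow a n := by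
  rw [Apow_nonpos a hn, Apow_nonpos a (by omega : n - 1 ≤ 0)]
  have h : (-(n - 1)).toNat = (-n).toNat + 1 := by omega
  rw [h, pow_succ']

/-- The defining relations bundled. -/
structure Ctx (q : ℂ) (a g : A) : Prop where
  hq : q ≠ 0
  h1 : star a * a + star g * g = 1
  h2 : a * star a + ((‖q‖ : ℂ) ^ 2) • (star g * g) = 1
  h3 : g * star g = star g * g
  h4 : a * g = (starRingEnd ℂ q) • (g * a)
  h5 : a * star g = q • (star g * a)

namespace Ctx

variable {q : ℂ} {a g : A} (hx : Ctx q a g)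

lemma habs : ((‖q‖ : ℂ)) ^ 2 = q * starRingEnd ℂ q := by
  rw [Complex.mul_conj, Complex.normSq_eq_norm_sq]; push_cast; ring

include hx

lemma h4s : g * star a = (starRingEnd ℂ q) • (star a * g) := by
  have h := congrArg star hx.h5
  rw [star_mul, star_star, star_smul, star_mul, star_star] at h
  rw [starRingEnd_apply]; exact h

lemma h5s : star g * star a = q • (star a * star g) := by
  have h := congrArg star hx.h4
  rw [star_mul, star_smul, star_mul] at h
  rw [starRingEnd_apply, star_star] at h
  exact h

lemma h1' : star a * a = 1 - star g * g := eq_sub_of_add_eq hx.h1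

lemma h2' : a * star a = 1 - (q * starRingEnd ℂ q) • (star g * g) := by
  rw [← habs]; exact eq_sub_of_add_eq hx.h2

lemma commute_g_gs : Commute g (star g) := hx.h3

lemma g_mul_W (m k : ℕ) : g * (g ^ m * (star g) ^ k) = g ^ (m+1) * (star g) ^ k := by
  rw [← mul_assoc, ← pow_succ']

lemma gs_mul_W (m k : ℕ) : star g * (g ^ m * (star g) ^ k) = g ^ m * (star g) ^ (k+1) := by
  rw [← mul_assoc, ((hx.commute_g_gs.symm).pow_right m).eq, mul_assoc, ← pow_succ']

lemma W_mul_g (m k : ℕ) : (g ^ m * (star g) ^ k) * g = g ^ (m+1) * (star g) ^ k := by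
  rw [mul_assoc, ((hx.commute_g_gs.symm).pow_left k).eq, ← mul_assoc, ← pow_succ]

lemma W_mul_gs (m k : ℕ) : (g ^ m * (star g) ^ k) * star g = g ^ m * (star g) ^ (k+1) := by
  rw [mul_assoc, ← pow_succ]

lemma gsg_mul_W (m k : ℕ) :
    (star g * g) * (g ^ m * (star g) ^ k) = g ^ (m+1) * (star g) ^ (k+1) := by
  rw [mul_assoc, hx.g_mul_W, hx.gs_mul_W]

lemma a_mul_W (m k : ℕ) :
    a * (g ^ m * (star g) ^ k)
      = ((starRingEnd ℂ q) ^ m * q ^ k) • ((g ^ m * (star g) ^ k) * a) := by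
  rw [← mul_assoc, mul_pow_scalar hx.h4 m, smul_mul_assoc, mul_assoc,
    mul_pow_scalar hx.h5 k, mul_smul_comm, smul_smul, mul_assoc]

lemma W_mul_as (m k : ℕ) :
    (g ^ m * (star g) ^ k) * star a
      = ((starRingEnd ℂ q) ^ m * q ^ k) • (star a * (g ^ m * (star g) ^ k)) := by
  rw [mul_assoc, pow_mul_scalar (hx.h5s) k, mul_smul_comm, ← mul_assoc,
    pow_mul_scalar (hx.h4s) m, smul_mul_assoc, smul_smul, mul_assoc, mul_comm (q ^ k)]

lemma apow_mul_gsg (t : ℕ) :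
    a ^ t * (star g * g) = ((q * starRingEnd ℂ q) ^ t) • ((star g * g) * a ^ t) := by
  rw [← mul_assoc, pow_mul_scalar (hx.h5) t, smul_mul_assoc, mul_assoc,
    pow_mul_scalar (hx.h4) t, mul_smul_comm, smul_smul, ← mul_assoc, ← mul_pow]

lemma gsg_mul_aspow (t : ℕ) :
    (star g * g) * (star a) ^ t
      = ((q * starRingEnd ℂ q) ^ t) • ((star a) ^ t * (star g * g)) := by
  rw [mul_assoc, mul_pow_scalar (hx.h4s) t, mul_smul_comm, ← mul_assoc,
    mul_pow_scalar (hx.h5s) t, smul_mul_assoc, smul_smul, mul_assoc, mul_comm ((starRingEnd ℂ q) ^ t), ← mul_pow]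

end Ctx
end SUqAux
namespace SUqAux
variable {A : Type*} [Ring A] [Algebra ℂ A] [StarRing A] [StarModule ℂ A]
namespace Ctx
variable {q : ℂ} {a g : A} (hx : Ctx q a g)
include hx

lemma cfac_ne (m k : ℕ) : (starRingEnd ℂ q) ^ m * q ^ k ≠ 0 :=
  mul_ne_zero (pow_ne_zero _ (qb_ne hx.hq)) (pow_ne_zero _ hx.hq)

lemma qcb_ne : q * starRingEnd ℂ q ≠ 0 := mul_ne_zero hx.hq (qb_ne hx.hq)

lemma W_mul_a (m k : ℕ) :
    (g ^ m * (star g) ^ k) * a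
      = ((starRingEnd ℂ q) ^ m * q ^ k)⁻¹ • (a * (g ^ m * (star g) ^ k)) :=
  smul_flip (hx.cfac_ne m k) (hx.a_mul_W m k)

/-- `M(n,m,k) * g = M(n,m+1,k)` -/
lemma R1 (n : ℤ) (m k : ℕ) : suqMono a g (n,m,k) * g = suqMono a g (n,m+1,k) := by
  rw [suqMono_def, suqMono_def, mul_assoc, hx.W_mul_g]

/-- `M(n,m,k) * γ* = M(n,m,k+1)` -/
lemma R2 (n : ℤ) (m k : ℕ) : suqMono a g (n,m,k) * star g = suqMono a g (n,m,k+1) := by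
  rw [suqMono_def, suqMono_def, mul_assoc, hx.W_mul_gs]

lemma R3a {n : ℤ} (hn : 0 ≤ n) (m k : ℕ) :
    suqMono a g (n,m,k) * a
      = ((starRingEnd ℂ q) ^ m * q ^ k)⁻¹ • suqMono a g (n+1,m,k) := by
  rw [suqMono_def, suqMono_def, mul_assoc, hx.W_mul_a, mul_smul_comm, ← mul_assoc,
    ← Apow_succ a hn]

lemma apow_mul_a_neg {n : ℤ} (hn : n < 0) :
    Apow a n * a = Apow a (n+1) - Apow a (n+1) * (star g * g) := by
  rw [Apow_neg' a hn, Apow_nonpos a (by omega : n + 1 ≤ 0)]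
  have h : (-n).toNat = (-(n+1)).toNat + 1 := by omega
  rw [h, pow_succ, mul_assoc, hx.h1', mul_sub, mul_one]

lemma R3b {n : ℤ} (hn : n < 0) (m k : ℕ) :
    suqMono a g (n,m,k) * a
      = ((starRingEnd ℂ q) ^ m * q ^ k)⁻¹ •
          (suqMono a g (n+1,m,k) - suqMono a g (n+1,m+1,k+1)) := by
  rw [suqMono_def, suqMono_def, suqMono_def, mul_assoc, hx.W_mul_a, mul_smul_comm,
    ← mul_assoc, hx.apow_mul_a_neg hn, sub_mul, mul_assoc (Apow a (n+1)), hx.gsg_mul_W]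

lemma R4a {n : ℤ} (hn : n ≤ 0) (m k : ℕ) :
    suqMono a g (n,m,k) * star a
      = ((starRingEnd ℂ q) ^ m * q ^ k) • suqMono a g (n-1,m,k) := by
  rw [suqMono_def, suqMono_def, mul_assoc, hx.W_mul_as, mul_smul_comm, ← mul_assoc,
    ← Apow_pred a hn]

lemma apow_mul_as_pos {n : ℤ} (hn : 0 < n) :
    Apow a n * star a
      = Apow a (n-1) - (q * starRingEnd ℂ q) • (Apow a (n-1) * (star g * g)) := by
  rw [Apow_nonneg a (le_of_lt hn), Apow_nonneg a (by omega : (0:ℤ) ≤ n - 1)]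
  have h : n.toNat = (n-1).toNat + 1 := by omega
  rw [h, pow_succ, mul_assoc, hx.h2', mul_sub, mul_one, mul_smul_comm]

lemma R4b {n : ℤ} (hn : 0 < n) (m k : ℕ) :
    suqMono a g (n,m,k) * star a
      = ((starRingEnd ℂ q) ^ m * q ^ k) •
          (suqMono a g (n-1,m,k) - (q * starRingEnd ℂ q) • suqMono a g (n-1,m+1,k+1)) := by
  rw [suqMono_def, suqMono_def, suqMono_def, mul_assoc, hx.W_mul_as, mul_smul_comm,
    ← mul_assoc, hx.apow_mul_as_pos hn, sub_mul, smul_mul_assoc,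
    mul_assoc (Apow a (n-1)), hx.gsg_mul_W]

lemma F1a {n : ℤ} (hn : 0 ≤ n) (m k : ℕ) :
    g * suqMono a g (n,m,k) = ((starRingEnd ℂ q) ^ n.toNat)⁻¹ • suqMono a g (n,m+1,k) := by
  have h : g * Apow a n = ((starRingEnd ℂ q) ^ n.toNat)⁻¹ • (Apow a n * g) := by
    rw [Apow_nonneg a hn]
    exact smul_flip (pow_ne_zero _ (qb_ne hx.hq)) (pow_mul_scalar hx.h4 n.toNat)
  rw [suqMono_def, suqMono_def, ← mul_assoc, h, smul_mul_assoc, mul_assoc, hx.g_mul_W]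

lemma F1b {n : ℤ} (hn : n < 0) (m k : ℕ) :
    g * suqMono a g (n,m,k) = ((starRingEnd ℂ q) ^ (-n).toNat) • suqMono a g (n,m+1,k) := by
  have h : g * Apow a n = ((starRingEnd ℂ q) ^ (-n).toNat) • (Apow a n * g) := by
    rw [Apow_neg' a hn]; exact mul_pow_scalar (hx.h4s) (-n).toNat
  rw [suqMono_def, suqMono_def, ← mul_assoc, h, smul_mul_assoc, mul_assoc, hx.g_mul_W]

lemma F2a {n : ℤ} (hn : 0 ≤ n) (m k : ℕ) :
    star g * suqMono a g (n,m,k) = (q ^ n.toNat)⁻¹ • suqMono a g (n,m,k+1) := by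
  have h : star g * Apow a n = (q ^ n.toNat)⁻¹ • (Apow a n * star g) := by
    rw [Apow_nonneg a hn]
    exact smul_flip (pow_ne_zero _ hx.hq) (pow_mul_scalar hx.h5 n.toNat)
  rw [suqMono_def, suqMono_def, ← mul_assoc, h, smul_mul_assoc, mul_assoc, hx.gs_mul_W]

lemma F2b {n : ℤ} (hn : n < 0) (m k : ℕ) :
    star g * suqMono a g (n,m,k) = (q ^ (-n).toNat) • suqMono a g (n,m,k+1) := by
  have h : star g * Apow a n = (q ^ (-n).toNat) • (Apow a n * star g) := by
    rw [Apow_neg' a hn]; exact mul_pow_scalar (hx.h5s) (-n).toNat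
  rw [suqMono_def, suqMono_def, ← mul_assoc, h, smul_mul_assoc, mul_assoc, hx.gs_mul_W]

lemma F3a {n : ℤ} (hn : 0 ≤ n) (m k : ℕ) :
    a * suqMono a g (n,m,k) = suqMono a g (n+1,m,k) := by
  rw [suqMono_def, suqMono_def, ← mul_assoc, ← Apow_succ' a hn]

lemma F3b {n : ℤ} (hn : n < 0) (m k : ℕ) :
    a * suqMono a g (n,m,k)
      = suqMono a g (n+1,m,k)
        - ((q * starRingEnd ℂ q) ^ (-n).toNat) • suqMono a g (n+1,m+1,k+1) := by
  have key : a * Apow a n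
      = Apow a (n+1)
        - ((q * starRingEnd ℂ q) ^ (-n).toNat) • (Apow a (n+1) * (star g * g)) := by
    rw [Apow_neg' a hn, Apow_nonpos a (by omega : n + 1 ≤ 0)]
    have h : (-n).toNat = (-(n+1)).toNat + 1 := by omega
    rw [h, pow_succ', ← mul_assoc, hx.h2', sub_mul, one_mul, smul_mul_assoc,
      hx.gsg_mul_aspow, smul_smul, ← pow_succ']
  rw [suqMono_def, suqMono_def, suqMono_def, ← mul_assoc, key, sub_mul, smul_mul_assoc,
    mul_assoc (Apow a (n+1)), hx.gsg_mul_W]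

lemma F4a {n : ℤ} (hn : n ≤ 0) (m k : ℕ) :
    star a * suqMono a g (n,m,k) = suqMono a g (n-1,m,k) := by
  rw [suqMono_def, suqMono_def, ← mul_assoc, ← Apow_pred' a hn]

lemma F4b {n : ℤ} (hn : 0 < n) (m k : ℕ) :
    star a * suqMono a g (n,m,k)
      = suqMono a g (n-1,m,k)
        - ((q * starRingEnd ℂ q) ^ (n-1).toNat)⁻¹ • suqMono a g (n-1,m+1,k+1) := by
  have key : star a * Apow a n
      = Apow a (n-1)
        - ((q * starRingEnd ℂ q) ^ (n-1).toNat)⁻¹ • (Apow a (n-1) * (star g * g)) := by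
    rw [Apow_nonneg a hn.le, Apow_nonneg a (by omega : (0:ℤ) ≤ n - 1)]
    have h : n.toNat = (n-1).toNat + 1 := by omega
    have h2 := smul_flip (pow_ne_zero (n-1).toNat hx.qcb_ne) (hx.apow_mul_gsg (n-1).toNat)
    rw [h, pow_succ', ← mul_assoc, hx.h1', sub_mul, one_mul, h2]
  rw [suqMono_def, suqMono_def, suqMono_def, ← mul_assoc, key, sub_mul, smul_mul_assoc,
    mul_assoc (Apow a (n-1)), hx.gsg_mul_W]

end Ctx
end SUqAux
namespace SUqAux
variable {A : Type*} [Ring A] [Algebra ℂ A] [StarRing A] [StarModule ℂ A]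

lemma zpow_toNat {c : ℂ} {n : ℤ} (hn : 0 ≤ n) : c ^ n = c ^ n.toNat := by
  rw [← zpow_natCast, Int.toNat_of_nonneg hn]

lemma zpow_neg_toNat {c : ℂ} (hc : c ≠ 0) {n : ℤ} (hn : n ≤ 0) :
    c ^ n = (c ^ (-n).toNat)⁻¹ := by
  rw [← zpow_natCast, Int.toNat_of_nonneg (by omega : (0:ℤ) ≤ -n), zpow_neg, inv_inv]

lemma mono_one (a g : A) : suqMono a g (0,0,0) = 1 := by simp [suqMono]
lemma mono_a (a g : A) : suqMono a g (1,0,0) = a := by simp [suqMono]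
lemma mono_as (a g : A) : suqMono a g (-1,0,0) = star a := by
  simp [suqMono]
lemma mono_g (a g : A) : suqMono a g (0,1,0) = g := by simp [suqMono]
lemma mono_gs (a g : A) : suqMono a g (0,0,1) = star g := by simp [suqMono]

/-- The antipode, defined on the basis. -/
def SMap (q : ℂ) (a g : A) (b : Module.Basis (ℤ × ℕ × ℕ) ℂ A) : A →ₗ[ℂ] A :=
  b.constr ℂ (fun i => cc q i • suqMono a g (-i.1, i.2))

section SMap
variable {q : ℂ} {a g : A} {b : Module.Basis (ℤ × ℕ × ℕ) ℂ A}
  (hb : ∀ i, b i = suqMono a g i)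
include hb

lemma SMap_mono' (i : ℤ × ℕ × ℕ) :
    SMap q a g b (suqMono a g i) = cc q i • suqMono a g (-i.1, i.2) := by
  rw [← hb i, SMap, Module.Basis.constr_basis]

omit hb in
lemma SMap_mono (q : ℂ) (i : ℤ × ℕ × ℕ) (hb : ∀ i, b i = suqMono a g i) :
    SMap q a g b (suqMono a g i) = cc q i • suqMono a g (-i.1, i.2) :=
  SMap_mono' hb i

lemma SMap_one : SMap q a g b (1 : A) = 1 := by
  have h := SMap_mono q (0,0,0) hb
  rw [mono_one] at h
  rw [h, cc_one]
  simp [suqMono]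

lemma SMap_a : SMap q a g b a = star a := by
  have h := SMap_mono q (1,0,0) hb
  rw [mono_a] at h
  rw [h, cc_a, one_smul]
  simp [suqMono]

lemma SMap_as : SMap q a g b (star a) = a := by
  have h := SMap_mono q (-1,0,0) hb
  rw [mono_as] at h
  rw [h, cc_as, one_smul]
  simp [suqMono]

lemma SMap_g : SMap q a g b g = (-(starRingEnd ℂ q)) • g := by
  have h := SMap_mono q (0,1,0) hb
  rw [mono_g] at h
  rw [h, cc_g]
  congr 1
  simp [suqMono]

lemma SMap_gs : SMap q a g b (star g) = (-q⁻¹) • star g := by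
  have h := SMap_mono q (0,0,1) hb
  rw [mono_gs] at h
  rw [h, cc_gs]
  congr 1
  simp [suqMono]

end SMap

namespace Ctx
variable {q : ℂ} {a g : A} {b : Module.Basis (ℤ × ℕ × ℕ) ℂ A}
  (hx : Ctx q a g) (hb : ∀ i, b i = suqMono a g i)
include hx hb

lemma Seq_g {p : ℤ} (n : ℤ) (m k : ℕ) (hp : (m:ℤ) - k = p) :
    SMap q a g b (suqMono a g (n,m,k) * g)
      = (q / starRingEnd ℂ q) ^ (-(p * 1)) •
          (SMap q a g b g * SMap q a g b (suqMono a g (n,m,k))) := by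
  subst hp
  rw [hx.R1, SMap_mono' hb, SMap_mono' hb, SMap_g hb, smul_mul_assoc, mul_smul_comm,
    smul_smul, smul_smul]
  rcases le_or_gt n 0 with hn | hn
  · rw [hx.F1a (by omega : (0:ℤ) ≤ -n), smul_smul]
    congr 1
    rw [cc_I1 hx.hq, zpow_neg_toNat (qb_ne hx.hq) hn,
      (by ring : -(((m:ℤ) - k) * 1) = (k:ℤ) - m)]
    ring
  · rw [hx.F1b (by omega : -n < 0), smul_smul]
    congr 1
    rw [cc_I1 hx.hq, zpow_toNat hn.le,
      (by ring : -(((m:ℤ) - k) * 1) = (k:ℤ) - m)]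
    simp only [neg_neg]
    ring

lemma Seq_gs {p : ℤ} (n : ℤ) (m k : ℕ) (hp : (m:ℤ) - k = p) :
    SMap q a g b (suqMono a g (n,m,k) * star g)
      = (q / starRingEnd ℂ q) ^ (-(p * (-1))) •
          (SMap q a g b (star g) * SMap q a g b (suqMono a g (n,m,k))) := by
  subst hp
  rw [hx.R2, SMap_mono' hb, SMap_mono' hb, SMap_gs hb, smul_mul_assoc, mul_smul_comm,
    smul_smul, smul_smul]
  rcases le_or_gt n 0 with hn | hn
  · rw [hx.F2a (by omega : (0:ℤ) ≤ -n), smul_smul]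
    congr 1
    rw [cc_I2 hx.hq, zpow_neg_toNat hx.hq hn,
      (by ring : -(((m:ℤ) - k) * (-1)) = (m:ℤ) - k)]
    ring
  · rw [hx.F2b (by omega : -n < 0), smul_smul]
    congr 1
    rw [cc_I2 hx.hq, zpow_toNat hn.le,
      (by ring : -(((m:ℤ) - k) * (-1)) = (m:ℤ) - k)]
    simp only [neg_neg]
    ring

end Ctx
end SUqAux
namespace SUqAux
variable {A : Type*} [Ring A] [Algebra ℂ A] [StarRing A] [StarModule ℂ A]
namespace Ctx
variable {q : ℂ} {a g : A} {b : Module.Basis (ℤ × ℕ × ℕ) ℂ A}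
  (hx : Ctx q a g) (hb : ∀ i, b i = suqMono a g i)
include hx hb

lemma Seq_a {p : ℤ} (n : ℤ) (m k : ℕ) (hp : (m:ℤ) - k = p) :
    SMap q a g b (suqMono a g (n,m,k) * a)
      = (q / starRingEnd ℂ q) ^ (-(p * 0)) •
          (SMap q a g b a * SMap q a g b (suqMono a g (n,m,k))) := by
  have hm : ((starRingEnd ℂ q) ^ m : ℂ) ≠ 0 := pow_ne_zero _ (qb_ne hx.hq)
  have hk : (q ^ k : ℂ) ≠ 0 := pow_ne_zero _ hx.hq
  rw [(show -(p * 0) = 0 by ring), zpow_zero, one_smul, SMap_a hb, SMap_mono' hb,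
    mul_smul_comm]
  rcases le_or_gt 0 n with hn | hn
  · have hF := hx.F4a (show -n ≤ 0 by omega) m k
    rw [(show (-n - 1 : ℤ) = -(n+1) by ring)] at hF
    rw [hx.R3a hn, map_smul, SMap_mono' hb, hF, smul_smul]
    congr 1
    rw [cc_I3 hx.hq, ← mul_assoc, inv_mul_cancel₀ (hx.cfac_ne m k), one_mul]
  · have hF := hx.F4b (show (0:ℤ) < -n by omega) m k
    rw [(show (-n - 1 : ℤ) = -(n+1) by ring)] at hF
    rw [hx.R3b hn, map_smul, map_sub, SMap_mono' hb, SMap_mono' hb, hF, smul_sub,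
      smul_sub, smul_smul, smul_smul, smul_smul]
    congr 1
    · congr 1
      rw [cc_I3 hx.hq, ← mul_assoc, inv_mul_cancel₀ (hx.cfac_ne m k), one_mul]
    · congr 1
      rw [cc_I4 hx.hq, ← zpow_neg_toNat hx.qcb_ne (show n + 1 ≤ 0 by omega)]
      field_simp

lemma Seq_as {p : ℤ} (n : ℤ) (m k : ℕ) (hp : (m:ℤ) - k = p) :
    SMap q a g b (suqMono a g (n,m,k) * star a)
      = (q / starRingEnd ℂ q) ^ (-(p * 0)) •
          (SMap q a g b (star a) * SMap q a g b (suqMono a g (n,m,k))) := by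
  have hm : ((starRingEnd ℂ q) ^ m : ℂ) ≠ 0 := pow_ne_zero _ (qb_ne hx.hq)
  have hk : (q ^ k : ℂ) ≠ 0 := pow_ne_zero _ hx.hq
  have h₁ := cc_I3 (q := q) hx.hq (n-1) m k
  rw [(show (n:ℤ) - 1 + 1 = n by ring)] at h₁
  rw [(show -(p * 0) = 0 by ring), zpow_zero, one_smul, SMap_as hb, SMap_mono' hb,
    mul_smul_comm]
  rcases le_or_gt n 0 with hn | hn
  · have hF := hx.F3a (show (0:ℤ) ≤ -n by omega) m k
    rw [(show (-n + 1 : ℤ) = -(n-1) by ring)] at hF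
    rw [hx.R4a hn, map_smul, SMap_mono' hb, hF, smul_smul]
    congr 1
    exact h₁.symm
  · have hF := hx.F3b (show (-n : ℤ) < 0 by omega) m k
    rw [(show (-n + 1 : ℤ) = -(n-1) by ring), neg_neg] at hF
    have h₄ := cc_I4' (q := q) hx.hq (n-1) m k
    rw [hx.R4b hn, map_smul, map_sub, map_smul, SMap_mono' hb, SMap_mono' hb]
    simp only [smul_sub, smul_smul]
    rw [hF]
    simp only [smul_sub, smul_smul]
    congr 1
    · congr 1
      exact h₁.symm
    · congr 1
      rw [h₄, h₁, zpow_sub₀ hx.qcb_ne, zpow_one, zpow_toNat hn.le]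
      field_simp [hx.hq, qb_ne hx.hq]
end Ctx
end SUqAux
namespace SUqAux
variable {A : Type*} [Ring A] [Algebra ℂ A] [StarRing A] [StarModule ℂ A]

lemma mono_mem (a g : A) (i : ℤ × ℕ × ℕ) :
    suqMono a g i ∈ suqHomog a g ((i.2.1 : ℤ) - i.2.2) :=
  Submodule.subset_span ⟨i, rfl, rfl⟩

lemma mono_mem' (a g : A) (i : ℤ × ℕ × ℕ) {p : ℤ} (hp : (i.2.1 : ℤ) - i.2.2 = p) :
    suqMono a g i ∈ suqHomog a g p := hp ▸ mono_mem a g i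

lemma mem_a (a g : A) : a ∈ suqHomog a g 0 := by
  have h := mono_mem' a g (1,0,0) (p := 0) (by norm_num)
  rwa [mono_a] at h

lemma mem_as (a g : A) : star a ∈ suqHomog a g 0 := by
  have h := mono_mem' a g (-1,0,0) (p := 0) (by norm_num)
  rwa [mono_as] at h

lemma mem_g (a g : A) : g ∈ suqHomog a g 1 := by
  have h := mono_mem' a g (0,1,0) (p := 1) (by norm_num)
  rwa [mono_g] at h

lemma mem_gs (a g : A) : star g ∈ suqHomog a g (-1) := by
  have h := mono_mem' a g (0,0,1) (p := -1) (by norm_num)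
  rwa [mono_gs] at h

lemma mem_one (a g : A) : (1 : A) ∈ suqHomog a g 0 := by
  have h := mono_mem' a g (0,0,0) (p := 0) (by norm_num)
  rwa [mono_one] at h

/-- the key inductive predicate: `y` is homogeneous of degree `r` and multiplication
by `y` on the right interacts with `SMap` in the braided way. -/
def GoodAt (q : ℂ) (a g : A) (b : Module.Basis (ℤ × ℕ × ℕ) ℂ A) (r : ℤ) (y : A) : Prop :=
  y ∈ suqHomog a g r ∧
  ∀ (p : ℤ) (x : A), x ∈ suqHomog a g p →
    x * y ∈ suqHomog a g (p + r) ∧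
    SMap q a g b (x * y)
      = (q / starRingEnd ℂ q) ^ (-(p * r)) • (SMap q a g b y * SMap q a g b x)

namespace Ctx
variable {q : ℂ} {a g : A} {b : Module.Basis (ℤ × ℕ × ℕ) ℂ A}
  (hx : Ctx q a g) (hb : ∀ i, b i = suqMono a g i)
include hx hb

lemma good_one : GoodAt q a g b 0 (1 : A) := by
  refine ⟨mem_one a g, fun p x hxm => ⟨by simpa using hxm, ?_⟩⟩
  rw [mul_one, SMap_one hb, one_mul, (show -(p * 0) = 0 by ring), zpow_zero, one_smul]

lemma good_mul {r s : ℤ} {y z : A} (hy : GoodAt q a g b r y) (hz : GoodAt q a g b s z) :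
    GoodAt q a g b (r + s) (y * z) := by
  obtain ⟨hym, hy2⟩ := hy
  obtain ⟨hzm, hz2⟩ := hz
  refine ⟨(hz2 r y hym).1, fun p x hxm => ?_⟩
  have h1 := hy2 p x hxm
  have h2 := hz2 (p + r) (x * y) h1.1
  constructor
  · rw [← mul_assoc, (show p + (r + s) = p + r + s by ring)]
    exact h2.1
  · rw [← mul_assoc, h2.2, h1.2, (hz2 r y hym).2]
    simp only [mul_smul_comm, smul_mul_assoc, smul_smul, mul_assoc]
    congr 1
    rw [← zpow_add₀ (zeta_ne hx.hq), ← zpow_add₀ (zeta_ne hx.hq)]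
    congr 1
    ring

lemma good_zero (r : ℤ) : GoodAt q a g b r (0 : A) := by
  refine ⟨Submodule.zero_mem _, fun p x hxm => ?_⟩
  simp

lemma good_add {r : ℤ} {y z : A} (hy : GoodAt q a g b r y) (hz : GoodAt q a g b r z) :
    GoodAt q a g b r (y + z) := by
  refine ⟨Submodule.add_mem _ hy.1 hz.1, fun p x hxm => ?_⟩
  have h1 := hy.2 p x hxm
  have h2 := hz.2 p x hxm
  refine ⟨by rw [mul_add]; exact Submodule.add_mem _ h1.1 h2.1, ?_⟩
  rw [mul_add, map_add, h1.2, h2.2, map_add, add_mul, smul_add]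

lemma good_smul {r : ℤ} {y : A} (c : ℂ) (hy : GoodAt q a g b r y) :
    GoodAt q a g b r (c • y) := by
  refine ⟨Submodule.smul_mem _ _ hy.1, fun p x hxm => ?_⟩
  have h1 := hy.2 p x hxm
  refine ⟨by rw [mul_smul_comm]; exact Submodule.smul_mem _ _ h1.1, ?_⟩
  rw [mul_smul_comm, map_smul, h1.2, map_smul, smul_mul_assoc, smul_comm]

lemma good_g : GoodAt q a g b 1 g := by
  refine ⟨mem_g a g, fun p x hxm => ?_⟩
  induction hxm using Submodule.span_induction with
  | mem x hxs =>
    obtain ⟨⟨n, m, k⟩, hp, rfl⟩ := hxs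
    constructor
    · rw [hx.R1]
      exact mono_mem' a g _ (by push_cast at hp ⊢; omega)
    · exact hx.Seq_g hb n m k hp
  | zero => simp
  | add x y hxm hym ihx ihy =>
    refine ⟨by rw [add_mul]; exact Submodule.add_mem _ ihx.1 ihy.1, ?_⟩
    rw [add_mul, map_add, ihx.2, ihy.2, map_add, mul_add, smul_add]
  | smul c x hxm ih =>
    refine ⟨by rw [smul_mul_assoc]; exact Submodule.smul_mem _ _ ih.1, ?_⟩
    rw [smul_mul_assoc, map_smul, ih.2, map_smul, mul_smul_comm, smul_comm]

lemma good_gs : GoodAt q a g b (-1) (star g) := by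
  refine ⟨mem_gs a g, fun p x hxm => ?_⟩
  induction hxm using Submodule.span_induction with
  | mem x hxs =>
    obtain ⟨⟨n, m, k⟩, hp, rfl⟩ := hxs
    constructor
    · rw [hx.R2]
      exact mono_mem' a g _ (by push_cast at hp ⊢; omega)
    · exact hx.Seq_gs hb n m k hp
  | zero => simp
  | add x y hxm hym ihx ihy =>
    refine ⟨by rw [add_mul]; exact Submodule.add_mem _ ihx.1 ihy.1, ?_⟩
    rw [add_mul, map_add, ihx.2, ihy.2, map_add, mul_add, smul_add]
  | smul c x hxm ih =>
    refine ⟨by rw [smul_mul_assoc]; exact Submodule.smul_mem _ _ ih.1, ?_⟩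
    rw [smul_mul_assoc, map_smul, ih.2, map_smul, mul_smul_comm, smul_comm]

lemma good_a : GoodAt q a g b 0 a := by
  refine ⟨mem_a a g, fun p x hxm => ?_⟩
  induction hxm using Submodule.span_induction with
  | mem x hxs =>
    obtain ⟨⟨n, m, k⟩, hp, rfl⟩ := hxs
    constructor
    · rcases le_or_gt 0 n with hn | hn
      · rw [hx.R3a hn]
        exact Submodule.smul_mem _ _ (mono_mem' a g _ (by push_cast at hp ⊢; omega))
      · rw [hx.R3b hn]
        exact Submodule.smul_mem _ _ (Submodule.sub_mem _
          (mono_mem' a g _ (by push_cast at hp ⊢; omega))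
          (mono_mem' a g _ (by push_cast at hp ⊢; omega)))
    · exact hx.Seq_a hb n m k hp
  | zero => simp
  | add x y hxm hym ihx ihy =>
    refine ⟨by rw [add_mul]; exact Submodule.add_mem _ ihx.1 ihy.1, ?_⟩
    rw [add_mul, map_add, ihx.2, ihy.2, map_add, mul_add, smul_add]
  | smul c x hxm ih =>
    refine ⟨by rw [smul_mul_assoc]; exact Submodule.smul_mem _ _ ih.1, ?_⟩
    rw [smul_mul_assoc, map_smul, ih.2, map_smul, mul_smul_comm, smul_comm]

lemma good_as : GoodAt q a g b 0 (star a) := by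
  refine ⟨mem_as a g, fun p x hxm => ?_⟩
  induction hxm using Submodule.span_induction with
  | mem x hxs =>
    obtain ⟨⟨n, m, k⟩, hp, rfl⟩ := hxs
    constructor
    · rcases le_or_gt n 0 with hn | hn
      · rw [hx.R4a hn]
        exact Submodule.smul_mem _ _ (mono_mem' a g _ (by push_cast at hp ⊢; omega))
      · rw [hx.R4b hn]
        exact Submodule.smul_mem _ _ (Submodule.sub_mem _
          (mono_mem' a g _ (by push_cast at hp ⊢; omega))
          (Submodule.smul_mem _ _ (mono_mem' a g _ (by push_cast at hp ⊢; omega))))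
    · exact hx.Seq_as hb n m k hp
  | zero => simp
  | add x y hxm hym ihx ihy =>
    refine ⟨by rw [add_mul]; exact Submodule.add_mem _ ihx.1 ihy.1, ?_⟩
    rw [add_mul, map_add, ihx.2, ihy.2, map_add, mul_add, smul_add]
  | smul c x hxm ih =>
    refine ⟨by rw [smul_mul_assoc]; exact Submodule.smul_mem _ _ ih.1, ?_⟩
    rw [smul_mul_assoc, map_smul, ih.2, map_smul, mul_smul_comm, smul_comm]

lemma good_apow : ∀ n : ℤ, GoodAt q a g b 0 (Apow a n) := by
  intro n
  induction n using Int.induction_on with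
  | zero =>
    rw [(show Apow a 0 = 1 by simp [Apow])]
    exact hx.good_one hb
  | succ n ih =>
    rw [Apow_succ a (by positivity)]
    simpa using hx.good_mul hb ih (hx.good_a hb)
  | pred n ih =>
    rw [(show (-(n:ℤ) - 1) = -(n:ℤ) + -1 by ring), (show (-(n:ℤ) + -1) = -(n:ℤ) - 1 by ring),
      Apow_pred a (by omega)]
    simpa using hx.good_mul hb ih (hx.good_as hb)

lemma good_gpow : ∀ m : ℕ, GoodAt q a g b m (g ^ m) := by
  intro m
  induction m with
  | zero => simpa using hx.good_one hb
  | succ m ih =>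
    rw [pow_succ]
    have h := hx.good_mul hb ih (hx.good_g hb)
    rw [(show ((m:ℤ) + 1) = ((m+1 : ℕ) : ℤ) by push_cast; ring)] at h
    exact h

lemma good_gspow : ∀ k : ℕ, GoodAt q a g b (-(k:ℤ)) ((star g) ^ k) := by
  intro k
  induction k with
  | zero => simpa using hx.good_one hb
  | succ k ih =>
    rw [pow_succ]
    have h := hx.good_mul hb ih (hx.good_gs hb)
    rw [(show (-(k:ℤ) + -1) = -((k+1 : ℕ) : ℤ) by push_cast; ring)] at h
    exact h

lemma good_mono (i : ℤ × ℕ × ℕ) :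
    GoodAt q a g b ((i.2.1 : ℤ) - i.2.2) (suqMono a g i) := by
  obtain ⟨n, m, k⟩ := i
  have h := hx.good_mul hb (hx.good_apow hb n)
    (hx.good_mul hb (hx.good_gpow hb m) (hx.good_gspow hb k))
  rw [(show (0 + ((m:ℤ) + -(k:ℤ))) = (m:ℤ) - k by ring)] at h
  rw [suqMono_def]
  exact h

lemma good_all (r : ℤ) (y : A) (hy : y ∈ suqHomog a g r) : GoodAt q a g b r y := by
  induction hy using Submodule.span_induction with
  | mem y hys =>
    obtain ⟨i, hp, rfl⟩ := hys
    have := hx.good_mono hb i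
    rwa [hp] at this
  | zero => exact hx.good_zero hb r
  | add y z hym hzm ihy ihz => exact hx.good_add hb ihy ihz
  | smul c y hym ih => exact hx.good_smul hb c ih

end Ctx

lemma SMap_homog {q : ℂ} {a g : A} {b : Module.Basis (ℤ × ℕ × ℕ) ℂ A}
    (hb : ∀ i, b i = suqMono a g i) (p : ℤ) (x : A) (hxm : x ∈ suqHomog a g p) :
    SMap q a g b x ∈ suqHomog a g p := by
  induction hxm using Submodule.span_induction with
  | mem x hxs =>
    obtain ⟨⟨n, m, k⟩, hp, rfl⟩ := hxs
    rw [SMap_mono' hb]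
    exact Submodule.smul_mem _ _ (mono_mem' a g _ (by push_cast at hp ⊢; omega))
  | zero => simp
  | add x y hxm hym ihx ihy => rw [map_add]; exact Submodule.add_mem _ ihx ihy
  | smul c x hxm ih => rw [map_smul]; exact Submodule.smul_mem _ _ ih

end SUqAux
/-- Existence and uniqueness of the antipode `S` of `Pol(SU_q(2))`:
the unique `ℂ`-linear map with `S(1) = 1`, `S(α) = α*`, `S(α*) = α`, `S(γ) = -conj(q)·γ`,
`S(γ*) = -q⁻¹·γ*`, preserving each `𝒜_p`, and braided-anti-multiplicative:
`S(ab) = ζ^{-pr}·S(b)S(a)` for `a ∈ 𝒜_p`, `b ∈ 𝒜_r`, where `ζ = q/conj(q)`. -/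
theorem suq_antipode_exists_unique {A : Type*} [Ring A] [Algebra ℂ A] [StarRing A]
    [StarModule ℂ A]
    (q : ℂ) (hq0 : 0 < ‖q‖) (hq1 : ‖q‖ < 1)
    (a g : A) (hrel : SUqRel q a g) (hbasis : SUqBasis a g) :
    ∃! S : A →ₗ[ℂ] A,
      S 1 = 1 ∧ S a = star a ∧ S (star a) = a ∧
      S g = (-(starRingEnd ℂ q)) • g ∧ S (star g) = (-q⁻¹) • star g ∧
      (∀ p : ℤ, ∀ x ∈ suqHomog a g p, S x ∈ suqHomog a g p) ∧
      (∀ p r : ℤ, ∀ x ∈ suqHomog a g p, ∀ y ∈ suqHomog a g r,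
        S (x * y) = ((q / starRingEnd ℂ q) ^ (-(p * r))) • (S y * S x)) := by
  classical
  obtain ⟨h1, h2, h3, h4, h5⟩ := hrel
  have hq : q ≠ 0 := by
    intro h
    rw [h] at hq0
    simp at hq0
  have hx : SUqAux.Ctx q a g := ⟨hq, h1, h2, h3, h4, h5⟩
  obtain ⟨hli, hsp⟩ := hbasis
  let b : Module.Basis (ℤ × ℕ × ℕ) ℂ A := Module.Basis.mk hli (by rw [hsp])
  have hb : ∀ i, b i = suqMono a g i := fun i => Module.Basis.mk_apply hli _ i
  set S := SUqAux.SMap q a g b with hSdef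
  have Smul7 : ∀ p r : ℤ, ∀ x ∈ suqHomog a g p, ∀ y ∈ suqHomog a g r,
      S (x * y) = ((q / starRingEnd ℂ q) ^ (-(p * r))) • (S y * S x) :=
    fun p r x hxp y hyr => ((hx.good_all hb r y hyr).2 p x hxp).2
  refine ⟨S, ⟨SUqAux.SMap_one hb, SUqAux.SMap_a hb, SUqAux.SMap_as hb, SUqAux.SMap_g hb,
    SUqAux.SMap_gs hb, fun p x hxm => SUqAux.SMap_homog hb p x hxm, Smul7⟩, ?_⟩
  rintro T ⟨hT1, hTa, hTas, hTg, hTgs, hThom, hTmul⟩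
  have key0 : ∀ n : ℤ, T (suqMono a g (n,0,0)) = S (suqMono a g (n,0,0)) := by
    intro n
    induction n using Int.induction_on with
    | zero => rw [SUqAux.mono_one, hT1, SUqAux.SMap_one hb]
    | succ n ih =>
      have e := hx.R3a (show (0:ℤ) ≤ n by positivity) 0 0
      simp only [pow_zero, one_mul, inv_one, one_smul] at e
      have hdeg : suqMono a g ((n:ℤ),0,0) ∈ suqHomog a g 0 :=
        SUqAux.mono_mem' a g _ (by norm_num)
      rw [← e, hTmul 0 0 _ hdeg a (SUqAux.mem_a a g),
        Smul7 0 0 _ hdeg a (SUqAux.mem_a a g), hTa, SUqAux.SMap_a hb, ih]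
    | pred n ih =>
      have e := hx.R4a (show -(n:ℤ) ≤ 0 by omega) 0 0
      simp only [pow_zero, one_mul, one_smul] at e
      have hdeg : suqMono a g (-(n:ℤ),0,0) ∈ suqHomog a g 0 :=
        SUqAux.mono_mem' a g _ (by norm_num)
      rw [← e, hTmul 0 0 _ hdeg (star a) (SUqAux.mem_as a g),
        Smul7 0 0 _ hdeg (star a) (SUqAux.mem_as a g), hTas, SUqAux.SMap_as hb, ih]
  have key1 : ∀ (m : ℕ) (n : ℤ),
      T (suqMono a g (n,m,0)) = S (suqMono a g (n,m,0)) := by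
    intro m
    induction m with
    | zero => exact key0
    | succ m ih =>
      intro n
      have e := hx.R1 n m 0
      have hdeg : suqMono a g (n,m,0) ∈ suqHomog a g (m:ℤ) :=
        SUqAux.mono_mem' a g _ (by norm_num)
      rw [← e, hTmul (m:ℤ) 1 _ hdeg g (SUqAux.mem_g a g),
        Smul7 (m:ℤ) 1 _ hdeg g (SUqAux.mem_g a g), hTg, SUqAux.SMap_g hb, ih]
  have key : ∀ (k m : ℕ) (n : ℤ),
      T (suqMono a g (n,m,k)) = S (suqMono a g (n,m,k)) := by
    intro k
    induction k with
    | zero => exact key1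
    | succ k ih =>
      intro m n
      have e := hx.R2 n m k
      have hdeg : suqMono a g (n,m,k) ∈ suqHomog a g ((m:ℤ) - k) :=
        SUqAux.mono_mem' a g _ rfl
      rw [← e, hTmul ((m:ℤ) - k) (-1) _ hdeg (star g) (SUqAux.mem_gs a g),
        Smul7 ((m:ℤ) - k) (-1) _ hdeg (star g) (SUqAux.mem_gs a g), hTgs,
        SUqAux.SMap_gs hb, ih]
  refine b.ext fun i => ?_
  rw [hb i]
  obtain ⟨n, m, k⟩ := i
  exact key k m n
end
end

section
/- Let m : 𝒜 ⊗_ℂ 𝒜 → 𝒜 be the ℂ-linear multiplication map m(a⊗b) = ab. Then for every a ∈ 𝒜 one has m((S⊗id)(Δ(a))) = ε(a)·1 = m((id⊗S)(Δ(a))), i.e. the antipode S is a two-sided convolution inverse of the identity on Pol(SU_q(2)). -/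
set_option linter.unusedSectionVars false
set_option maxHeartbeats 4000000


open scoped TensorProduct

noncomputable section

section Aux

variable {A : Type*} [Ring A] [Algebra ℂ A] [StarRing A]

lemma pow_mul_scalar {t u : A} {z : ℂ} (h : t * u = z • (u * t)) :
    ∀ n : ℕ, t ^ n * u = z ^ n • (u * t ^ n) := by
  intro n
  induction n with
  | zero => simp
  | succ n ih =>
    calc t ^ (n+1) * u = t ^ n * (t * u) := by rw [pow_succ, mul_assoc]
    _ = z • (t ^ n * u * t) := by rw [h, mul_smul_comm, mul_assoc]
    _ = z • (z ^ n • (u * t ^ n * t)) := by rw [ih, smul_mul_assoc]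
    _ = z ^ (n+1) • (u * t ^ (n+1)) := by
        rw [smul_smul, mul_assoc, ← pow_succ, ← pow_succ']

lemma suq_mono_mem (a g : A) {p : ℤ} (n : ℤ) (m k : ℕ) (h : (m:ℤ) - k = p) :
    suqMono a g (n, m, k) ∈ suqHomog a g p :=
  Submodule.subset_span ⟨(n, m, k), h, rfl⟩

lemma suq_mem_a (a g : A) (j m k : ℕ) :
    a ^ j * g ^ m * star g ^ k ∈ suqHomog a g ((m:ℤ) - k) := by
  have h : suqMono a g ((j:ℤ), m, k) = a ^ j * g ^ m * star g ^ k := by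
    simp [suqMono]
  exact h ▸ suq_mono_mem a g _ m k rfl

lemma suq_mem_as (a g : A) (j m k : ℕ) :
    star a ^ j * g ^ m * star g ^ k ∈ suqHomog a g ((m:ℤ) - k) := by
  rcases Nat.eq_zero_or_pos j with hj | hj
  · subst hj
    have h : suqMono a g (0, m, k) = star a ^ 0 * g ^ m * star g ^ k := by simp [suqMono]
    exact h ▸ suq_mono_mem a g _ m k rfl
  · have h : suqMono a g (-(j:ℤ), m, k) = star a ^ j * g ^ m * star g ^ k := by
      have h1 : ¬ ((0:ℤ) ≤ -(j:ℤ)) := by omega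
      simp [suqMono, h1, hj.ne']
    exact h ▸ suq_mono_mem a g _ m k rfl

lemma span_mul_right {s : Set A} {N : Submodule ℂ A} {t : A}
    (h : ∀ x ∈ s, x * t ∈ N) : ∀ x ∈ Submodule.span ℂ s, x * t ∈ N := by
  intro x hx
  have hs : s ⊆ ↑(N.comap (LinearMap.mulRight ℂ t)) := fun y hy => h y hy
  exact Submodule.span_le.mpr hs hx

lemma span_mul_left {s : Set A} {N : Submodule ℂ A} {t : A}
    (h : ∀ x ∈ s, t * x ∈ N) : ∀ x ∈ Submodule.span ℂ s, t * x ∈ N := by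
  intro x hx
  have hs : s ⊆ ↑(N.comap (LinearMap.mulLeft ℂ t)) := fun y hy => h y hy
  exact Submodule.span_le.mpr hs hx

lemma suq_shuffle {g : A} (h3 : g * star g = star g * g) (x : A) (m k : ℕ) :
    x * (star g * g) * g ^ m * star g ^ k = x * g ^ (m+1) * star g ^ (k+1) := by
  have hc0 : Commute g (star g) := h3
  have hcom : star g * g ^ (m+1) = g ^ (m+1) * star g := (hc0.symm.pow_right (m+1)).eq
  calc x * (star g * g) * g ^ m * star g ^ k
      = x * (star g * g ^ (m+1)) * star g ^ k := by
        rw [mul_assoc x, mul_assoc (star g), ← pow_succ']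
  _ = x * (g ^ (m+1) * star g) * star g ^ k := by rw [hcom]
  _ = x * g ^ (m+1) * star g ^ (k+1) := by
        rw [← mul_assoc, mul_assoc _ (star g) (star g ^ k), ← pow_succ']

lemma suq_H_mul_a {q : ℂ} {a g : A} (hq : q ≠ 0) (hc : (starRingEnd ℂ q) ≠ 0)
    (h1 : star a * a + star g * g = 1)
    (h3 : g * star g = star g * g)
    (h4 : a * g = (starRingEnd ℂ q) • (g * a))
    (h5 : a * star g = q • (star g * a)) :
    ∀ p : ℤ, ∀ x ∈ suqHomog a g p, x * a ∈ suqHomog a g p := by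
  have hga : g * a = (starRingEnd ℂ q)⁻¹ • (a * g) := by
    rw [h4, smul_smul, inv_mul_cancel₀ hc, one_smul]
  have hgsa : star g * a = q⁻¹ • (a * star g) := by
    rw [h5, smul_smul, inv_mul_cancel₀ hq, one_smul]
  intro p
  apply span_mul_right
  rintro x ⟨⟨n, m, k⟩, hdeg, rfl⟩
  rw [← hdeg]
  have key : suqMono a g (n, m, k) * a
      = ((q⁻¹) ^ k * ((starRingEnd ℂ q)⁻¹) ^ m) •
        ((if (0:ℤ) ≤ n then a ^ n.toNat else star a ^ (-n).toNat) * a * g ^ m * star g ^ k) := by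
    rw [suqMono]
    calc ((if (0:ℤ) ≤ n then a ^ n.toNat else star a ^ (-n).toNat) * g ^ m * star g ^ k) * a
        = (if (0:ℤ) ≤ n then a ^ n.toNat else star a ^ (-n).toNat) * g ^ m * (star g ^ k * a) := by
          rw [mul_assoc]
      _ = (q⁻¹) ^ k • ((if (0:ℤ) ≤ n then a ^ n.toNat else star a ^ (-n).toNat) * (g ^ m * a) * star g ^ k) := by
          rw [pow_mul_scalar hgsa k, mul_smul_comm, ← mul_assoc, mul_assoc _ (g ^ m) a]
      _ = ((q⁻¹) ^ k * ((starRingEnd ℂ q)⁻¹) ^ m) •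
          ((if (0:ℤ) ≤ n then a ^ n.toNat else star a ^ (-n).toNat) * a * g ^ m * star g ^ k) := by
          rw [pow_mul_scalar hga m, mul_smul_comm, smul_mul_assoc, smul_smul, ← mul_assoc]
  rw [key]
  apply Submodule.smul_mem
  by_cases hn : (0:ℤ) ≤ n
  · rw [if_pos hn, ← pow_succ]
    exact suq_mem_a a g _ m k
  · rw [if_neg hn]
    obtain ⟨j, hj⟩ : ∃ j : ℕ, (-n).toNat = j + 1 := ⟨(-n).toNat - 1, by omega⟩
    rw [hj, pow_succ, mul_assoc (star a ^ j)]
    have hsa : star a * a = 1 - star g * g := eq_sub_of_add_eq h1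
    rw [hsa, mul_sub, mul_one, sub_mul, sub_mul]
    apply Submodule.sub_mem
    · exact suq_mem_as a g j m k
    · rw [suq_shuffle h3]
      have := suq_mem_as a g j (m+1) (k+1)
      rwa [show ((m+1:ℕ):ℤ) - ((k+1:ℕ):ℤ) = (m:ℤ) - k by push_cast; ring] at this

lemma suq_H_mul_as {q w : ℂ} {a g : A} (hq : q ≠ 0) (hc : (starRingEnd ℂ q) ≠ 0)
    (h2 : a * star a = 1 - w • (star g * g))
    (h3 : g * star g = star g * g)
    (h4s : star g * star a = q • (star a * star g))
    (h5s : g * star a = (starRingEnd ℂ q) • (star a * g)) :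
    ∀ p : ℤ, ∀ x ∈ suqHomog a g p, x * star a ∈ suqHomog a g p := by
  intro p
  apply span_mul_right
  rintro x ⟨⟨n, m, k⟩, hdeg, rfl⟩
  rw [← hdeg]
  have key : suqMono a g (n, m, k) * star a
      = (q ^ k * (starRingEnd ℂ q) ^ m) •
        ((if (0:ℤ) ≤ n then a ^ n.toNat else star a ^ (-n).toNat) * star a * g ^ m * star g ^ k) := by
    rw [suqMono]
    calc ((if (0:ℤ) ≤ n then a ^ n.toNat else star a ^ (-n).toNat) * g ^ m * star g ^ k) * star a
        = (if (0:ℤ) ≤ n then a ^ n.toNat else star a ^ (-n).toNat) * g ^ m * (star g ^ k * star a) := by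
          rw [mul_assoc]
      _ = q ^ k • ((if (0:ℤ) ≤ n then a ^ n.toNat else star a ^ (-n).toNat) * (g ^ m * star a) * star g ^ k) := by
          rw [pow_mul_scalar h4s k, mul_smul_comm, ← mul_assoc, mul_assoc _ (g ^ m) (star a)]
      _ = (q ^ k * (starRingEnd ℂ q) ^ m) •
          ((if (0:ℤ) ≤ n then a ^ n.toNat else star a ^ (-n).toNat) * star a * g ^ m * star g ^ k) := by
          rw [pow_mul_scalar h5s m, mul_smul_comm, smul_mul_assoc, smul_smul, ← mul_assoc]
  rw [key]
  apply Submodule.smul_mem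
  by_cases hn : (0:ℤ) ≤ n
  · rw [if_pos hn]
    rcases Nat.eq_zero_or_pos n.toNat with h0 | h0
    · rw [h0, pow_zero, one_mul, ← pow_one (star a)]
      exact suq_mem_as a g 1 m k
    · obtain ⟨i, hi⟩ : ∃ i : ℕ, n.toNat = i + 1 := ⟨n.toNat - 1, by omega⟩
      rw [hi, pow_succ, mul_assoc (a ^ i), h2, mul_sub, mul_one, mul_smul_comm,
        sub_mul, sub_mul, smul_mul_assoc, smul_mul_assoc]
      apply Submodule.sub_mem
      · exact suq_mem_a a g i m k
      · apply Submodule.smul_mem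
        rw [suq_shuffle h3]
        have := suq_mem_a a g i (m+1) (k+1)
        rwa [show ((m+1:ℕ):ℤ) - ((k+1:ℕ):ℤ) = (m:ℤ) - k by push_cast; ring] at this
  · rw [if_neg hn, ← pow_succ]
    have := suq_mem_as a g ((-n).toNat + 1) m k
    exact this

lemma suq_H_mul_g {a g : A} (h3 : g * star g = star g * g) :
    ∀ p : ℤ, ∀ x ∈ suqHomog a g p, x * g ∈ suqHomog a g (p + 1) := by
  intro p
  apply span_mul_right
  rintro x ⟨⟨n, m, k⟩, hdeg, rfl⟩
  dsimp only at hdeg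
  have hc0 : Commute (star g) g := h3.symm
  have hcom : star g ^ k * g = g * star g ^ k := (hc0.pow_left k).eq
  have key : suqMono a g (n, m, k) * g = suqMono a g (n, m + 1, k) := by
    simp only [suqMono]
    rw [mul_assoc, hcom, ← mul_assoc, mul_assoc _ (g ^ m) g, ← pow_succ]
  rw [key]
  exact suq_mono_mem a g n (m+1) k (by push_cast; omega)

lemma suq_H_mul_gs {a g : A} :
    ∀ p : ℤ, ∀ x ∈ suqHomog a g p, x * star g ∈ suqHomog a g (p - 1) := by
  intro p
  apply span_mul_right
  rintro x ⟨⟨n, m, k⟩, hdeg, rfl⟩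
  dsimp only at hdeg
  have key : suqMono a g (n, m, k) * star g = suqMono a g (n, m, k + 1) := by
    simp only [suqMono]
    rw [mul_assoc, ← pow_succ]
  rw [key]
  exact suq_mono_mem a g n m (k+1) (by push_cast; omega)

lemma suq_pow_aux0 {a g t : A} (ht : ∀ p : ℤ, ∀ x ∈ suqHomog a g p, x * t ∈ suqHomog a g p) :
    ∀ (j : ℕ) (p : ℤ), ∀ x ∈ suqHomog a g p, x * t ^ j ∈ suqHomog a g p := by
  intro j
  induction j with
  | zero => intro p x hx; simpa using hx
  | succ j ih =>
    intro p x hx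
    rw [pow_succ, ← mul_assoc]
    exact ht p _ (ih p x hx)

lemma suq_pow_aux1 {a g t : A} {d : ℤ}
    (ht : ∀ p : ℤ, ∀ x ∈ suqHomog a g p, x * t ∈ suqHomog a g (p + d)) :
    ∀ (j : ℕ) (p : ℤ), ∀ x ∈ suqHomog a g p, x * t ^ j ∈ suqHomog a g (p + j * d) := by
  intro j
  induction j with
  | zero => intro p x hx; simpa using hx
  | succ j ih =>
    intro p x hx
    rw [pow_succ, ← mul_assoc]
    have h := ht _ _ (ih p x hx)
    rwa [show p + (j:ℕ) * d + d = p + ((j:ℕ)+1:ℕ) * d from by push_cast; ring] at h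

lemma suq_H_mul {a g : A}
    (hMa : ∀ p : ℤ, ∀ x ∈ suqHomog a g p, x * a ∈ suqHomog a g p)
    (hMas : ∀ p : ℤ, ∀ x ∈ suqHomog a g p, x * star a ∈ suqHomog a g p)
    (hMg : ∀ p : ℤ, ∀ x ∈ suqHomog a g p, x * g ∈ suqHomog a g (p + 1))
    (hMgs : ∀ p : ℤ, ∀ x ∈ suqHomog a g p, x * star g ∈ suqHomog a g (p - 1)) :
    ∀ p r : ℤ, ∀ x ∈ suqHomog a g p, ∀ y ∈ suqHomog a g r, x * y ∈ suqHomog a g (p + r) := by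
  have hMgs' : ∀ p : ℤ, ∀ x ∈ suqHomog a g p, x * star g ∈ suqHomog a g (p + (-1)) := by
    intro p x hx
    have := hMgs p x hx
    rwa [sub_eq_add_neg] at this
  intro p r x hx
  apply span_mul_left
  rintro y ⟨⟨n, m, k⟩, hdeg, rfl⟩
  have e : x * suqMono a g (n, m, k)
      = ((x * (if (0:ℤ) ≤ n then a ^ n.toNat else star a ^ (-n).toNat)) * g ^ m) * star g ^ k := by
    simp only [suqMono]
    rw [← mul_assoc, ← mul_assoc]
  rw [e]
  have hX : x * (if (0:ℤ) ≤ n then a ^ n.toNat else star a ^ (-n).toNat) ∈ suqHomog a g p := by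
    split
    · exact suq_pow_aux0 hMa _ p x hx
    · exact suq_pow_aux0 hMas _ p x hx
  have hXg := suq_pow_aux1 hMg m p _ hX
  have hXgs := suq_pow_aux1 hMgs' k _ _ hXg
  rwa [show p + (m:ℕ) * (1:ℤ) + (k:ℕ) * (-1:ℤ) = p + r from by rw [← hdeg]; push_cast; ring] at hXgs

lemma suq_eps_H {a g : A} (ε : A →ₐ[ℂ] ℂ) (hεg : ε g = 0) (hεgs : ε (star g) = 0) :
    ∀ p : ℤ, p ≠ 0 → ∀ x ∈ suqHomog a g p, ε x = 0 := by
  intro p hp x hx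
  induction hx using Submodule.span_induction with
  | mem w hw =>
    obtain ⟨⟨n, m, k⟩, hdeg, rfl⟩ := hw
    dsimp only at hdeg
    simp only [suqMono]
    rw [map_mul, map_mul, map_pow, map_pow, hεg, hεgs]
    rcases Nat.eq_zero_or_pos m with h | h
    · have hk : k ≠ 0 := by omega
      rw [zero_pow hk, mul_zero]
    · rw [zero_pow (by omega : m ≠ 0), mul_zero, zero_mul]
  | zero => simp
  | add u v _ _ hu hv => rw [map_add, hu, hv, add_zero]
  | smul c u _ hu => rw [map_smul, hu, smul_zero]

def suqTset (a g : A) (p : ℤ) : Set (A ⊗[ℂ] A) :=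
  {w | ∃ s : ℤ, ∃ u₁ ∈ suqHomog a g s, ∃ u₂ ∈ suqHomog a g (p - s), w = u₁ ⊗ₜ[ℂ] u₂}

lemma suq_T_mul {q : ℂ} {a g : A}
    {μ : A ⊗[ℂ] A →ₗ[ℂ] A ⊗[ℂ] A →ₗ[ℂ] A ⊗[ℂ] A}
    (hμ : ∀ (x w : A) (r s : ℤ), ∀ y ∈ suqHomog a g r, ∀ z ∈ suqHomog a g s,
      μ (x ⊗ₜ[ℂ] y) (z ⊗ₜ[ℂ] w)
        = ((q / starRingEnd ℂ q) ^ (-(r * s))) • ((x * z) ⊗ₜ[ℂ] (y * w)))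
    (hH : ∀ p r : ℤ, ∀ x ∈ suqHomog a g p, ∀ y ∈ suqHomog a g r, x * y ∈ suqHomog a g (p + r)) :
    ∀ p r : ℤ, ∀ u ∈ Submodule.span ℂ (suqTset a g p), ∀ v ∈ Submodule.span ℂ (suqTset a g r),
      μ u v ∈ Submodule.span ℂ (suqTset a g (p + r)) := by
  intro p r u hu
  induction hu using Submodule.span_induction with
  | mem w hw =>
    intro v hv
    induction hv using Submodule.span_induction with
    | mem w' hw' =>
      obtain ⟨s, u₁, hu₁, u₂, hu₂, rfl⟩ := hw
      obtain ⟨s', v₁, hv₁, v₂, hv₂, rfl⟩ := hw'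
      rw [hμ u₁ v₂ (p - s) s' u₂ hu₂ v₁ hv₁]
      apply Submodule.smul_mem
      apply Submodule.subset_span
      refine ⟨s + s', u₁ * v₁, hH _ _ _ hu₁ _ hv₁, u₂ * v₂, ?_, rfl⟩
      have h := hH _ _ _ hu₂ _ hv₂
      rwa [show (p - s) + (r - s') = (p + r) - (s + s') from by ring] at h
    | zero => rw [map_zero]; exact zero_mem _
    | add x y _ _ hx hy => rw [map_add]; exact add_mem hx hy
    | smul c x _ hx => rw [map_smul]; exact Submodule.smul_mem _ _ hx
  | zero => intro v hv; rw [map_zero, LinearMap.zero_apply]; exact zero_mem _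
  | add x y _ _ hx hy =>
    intro v hv
    rw [map_add, LinearMap.add_apply]
    exact add_mem (hx v hv) (hy v hv)
  | smul c x _ hx =>
    intro v hv
    rw [map_smul, LinearMap.smul_apply]
    exact Submodule.smul_mem _ _ (hx v hv)

lemma suq_left_conv {q : ℂ} {a g : A} (hζ : q / starRingEnd ℂ q ≠ 0)
    {μ : A ⊗[ℂ] A →ₗ[ℂ] A ⊗[ℂ] A →ₗ[ℂ] A ⊗[ℂ] A}
    (hμ : ∀ (x w : A) (r s : ℤ), ∀ y ∈ suqHomog a g r, ∀ z ∈ suqHomog a g s,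
      μ (x ⊗ₜ[ℂ] y) (z ⊗ₜ[ℂ] w)
        = ((q / starRingEnd ℂ q) ^ (-(r * s))) • ((x * z) ⊗ₜ[ℂ] (y * w)))
    {S : A →ₗ[ℂ] A}
    (hSm : ∀ p r : ℤ, ∀ x ∈ suqHomog a g p, ∀ y ∈ suqHomog a g r,
      S (x * y) = ((q / starRingEnd ℂ q) ^ (-(p * r))) • (S y * S x)) :
    ∀ (p r' : ℤ), ∀ v₁ ∈ suqHomog a g r', ∀ v₂ : A,
      ∀ u ∈ Submodule.span ℂ (suqTset a g p),
      (LinearMap.mul' ℂ A) ((TensorProduct.map S LinearMap.id) (μ u (v₁ ⊗ₜ[ℂ] v₂)))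
        = ((q / starRingEnd ℂ q) ^ (-(p * r'))) •
          (S v₁ * ((LinearMap.mul' ℂ A) ((TensorProduct.map S LinearMap.id) u)) * v₂) := by
  intro p r' v₁ hv₁ v₂ u hu
  induction hu using Submodule.span_induction with
  | mem w hw =>
    obtain ⟨s, u₁, hu₁, u₂, hu₂, rfl⟩ := hw
    rw [hμ u₁ v₂ (p - s) r' u₂ hu₂ v₁ hv₁, map_smul, map_smul]
    simp only [TensorProduct.map_tmul, LinearMap.mul'_apply, LinearMap.id_coe, id_eq]
    rw [hSm s r' u₁ hu₁ v₁ hv₁, smul_mul_assoc, smul_smul, ← zpow_add₀ hζ,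
      show -((p - s) * r') + -(s * r') = -(p * r') from by ring]
    congr 1
    noncomm_ring
  | zero => simp
  | add x y _ _ hx hy =>
    simp only [map_add, LinearMap.add_apply, hx, hy, mul_add, add_mul, smul_add]
  | smul z x _ hx =>
    simp only [map_smul, LinearMap.smul_apply, hx, mul_smul_comm, smul_mul_assoc, smul_smul]
    rw [mul_comm]

lemma suq_right_conv {q : ℂ} {a g : A} (hζ : q / starRingEnd ℂ q ≠ 0)
    {μ : A ⊗[ℂ] A →ₗ[ℂ] A ⊗[ℂ] A →ₗ[ℂ] A ⊗[ℂ] A}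
    (hμ : ∀ (x w : A) (r s : ℤ), ∀ y ∈ suqHomog a g r, ∀ z ∈ suqHomog a g s,
      μ (x ⊗ₜ[ℂ] y) (z ⊗ₜ[ℂ] w)
        = ((q / starRingEnd ℂ q) ^ (-(r * s))) • ((x * z) ⊗ₜ[ℂ] (y * w)))
    {S : A →ₗ[ℂ] A}
    (hSm : ∀ p r : ℤ, ∀ x ∈ suqHomog a g p, ∀ y ∈ suqHomog a g r,
      S (x * y) = ((q / starRingEnd ℂ q) ^ (-(p * r))) • (S y * S x)) :
    ∀ (t r : ℤ), ∀ u₂ ∈ suqHomog a g t, ∀ u₁ : A,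
      ∀ v ∈ Submodule.span ℂ (suqTset a g r),
      (LinearMap.mul' ℂ A) ((TensorProduct.map LinearMap.id S) (μ (u₁ ⊗ₜ[ℂ] u₂) v))
        = ((q / starRingEnd ℂ q) ^ (-(t * r))) •
          (u₁ * ((LinearMap.mul' ℂ A) ((TensorProduct.map LinearMap.id S) v)) * S u₂) := by
  intro t r u₂ hu₂ u₁ v hv
  induction hv using Submodule.span_induction with
  | mem w hw =>
    obtain ⟨s', v₁, hv₁, v₂, hv₂, rfl⟩ := hw
    rw [hμ u₁ v₂ t s' u₂ hu₂ v₁ hv₁, map_smul, map_smul]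
    simp only [TensorProduct.map_tmul, LinearMap.mul'_apply, LinearMap.id_coe, id_eq]
    rw [hSm t (r - s') u₂ hu₂ v₂ hv₂, mul_smul_comm, smul_smul, ← zpow_add₀ hζ,
      show -(t * s') + -(t * (r - s')) = -(t * r) from by ring]
    congr 1
    noncomm_ring
  | zero => simp
  | add x y _ _ hx hy =>
    simp only [map_add, LinearMap.add_apply, hx, hy, mul_add, add_mul, smul_add]
  | smul z x _ hx =>
    simp only [map_smul, LinearMap.smul_apply, hx, mul_smul_comm, smul_mul_assoc, smul_smul]
    rw [mul_comm]

end Aux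

/-- With `m : 𝒜 ⊗ 𝒜 → 𝒜` the multiplication map, for all `a ∈ 𝒜`:
`m((S⊗id)(Δ a)) = ε(a)·1 = m((id⊗S)(Δ a))`, i.e. the antipode is the two-sided convolution
inverse of the identity. -/

theorem suq_antipode_convolution_inverse {A : Type*} [Ring A] [Algebra ℂ A] [StarRing A]
    [StarModule ℂ A]
    (q : ℂ) (hq0 : 0 < ‖q‖) (hq1 : ‖q‖ < 1)
    (a g : A) (hrel : SUqRel q a g) (hbasis : SUqBasis a g)
    (μ : A ⊗[ℂ] A →ₗ[ℂ] A ⊗[ℂ] A →ₗ[ℂ] A ⊗[ℂ] A) (hμ : SUqBraidedMul q a g μ)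
    (Δ : A →ₗ[ℂ] A ⊗[ℂ] A) (hΔ : SUqComul q a g μ Δ)
    (S : A →ₗ[ℂ] A) (hS : SUqAntipode q a g S)
    (ε : A →ₐ[ℂ] ℂ) (hεa : ε a = 1) (hεg : ε g = 0) :
    ∀ x : A,
      (LinearMap.mul' ℂ A) ((TensorProduct.map S LinearMap.id) (Δ x)) = ε x • 1 ∧
      (LinearMap.mul' ℂ A) ((TensorProduct.map LinearMap.id S) (Δ x)) = ε x • 1 := by
  obtain ⟨h1, h2, h3, h4, h5⟩ := hrel
  obtain ⟨hΔ1, hΔm, hΔa, hΔg, hΔas, hΔgs⟩ := hΔ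
  obtain ⟨hS1, hSa, hSas, hSg, hSgs, hSH, hSm⟩ := hS
  have hμ' : ∀ (x w : A) (r s : ℤ), ∀ y ∈ suqHomog a g r, ∀ z ∈ suqHomog a g s,
      μ (x ⊗ₜ[ℂ] y) (z ⊗ₜ[ℂ] w)
        = ((q / starRingEnd ℂ q) ^ (-(r * s))) • ((x * z) ⊗ₜ[ℂ] (y * w)) := hμ
  have hq : q ≠ 0 := by
    intro h; rw [h] at hq0; simp at hq0
  have hc : starRingEnd ℂ q ≠ 0 := by
    intro h; exact hq (by simpa using congrArg (starRingEnd ℂ) h)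
  have hζ : q / starRingEnd ℂ q ≠ 0 := div_ne_zero hq hc
  have hq1' : q ≠ 1 := by intro h; rw [h] at hq1; simp at hq1
  -- derived star relations
  have h4s : star g * star a = q • (star a * star g) := by
    have h := congrArg star h4
    rw [star_mul, star_smul, star_mul, starRingEnd_apply, star_star] at h
    exact h
  have h5s : g * star a = (starRingEnd ℂ q) • (star a * g) := by
    have h := congrArg star h5
    rw [star_mul, star_star, star_smul, star_mul, star_star, ← starRingEnd_apply] at h
    exact h
  have hgsa : star g * a = q⁻¹ • (a * star g) := by
    rw [h5, smul_smul, inv_mul_cancel₀ hq, one_smul]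
  have habs : ((‖q‖ : ℂ)) ^ 2 = q * starRingEnd ℂ q := by
    rw [Complex.mul_conj, ← Complex.sq_norm]
    push_cast
    ring
  have h2' : a * star a = 1 - (q * starRingEnd ℂ q) • (star g * g) := by
    rw [← habs]; exact eq_sub_of_add_eq h2
  -- grading is multiplicative
  have hMa := suq_H_mul_a hq hc h1 h3 h4 h5
  have hMas := suq_H_mul_as hq hc h2' h3 h4s h5s
  have hMg := suq_H_mul_g (a := a) h3
  have hMgs := suq_H_mul_gs (a := a) (g := g)
  have hH := suq_H_mul hMa hMas hMg hMgs
  -- counit values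
  have hεas : ε (star a) = 1 := by
    have h := congrArg ε h1
    rw [map_add, map_mul, map_mul, map_one, hεa, hεg, mul_one, mul_zero, add_zero] at h
    exact h
  have hεgs : ε (star g) = 0 := by
    have h := congrArg ε h5
    rw [map_mul, map_smul, map_mul, hεa, one_mul, mul_one, smul_eq_mul] at h
    have h0 : (1 - q) * ε (star g) = 0 := by linear_combination h
    rcases mul_eq_zero.mp h0 with h' | h'
    · exact absurd (by linear_combination -h' : q = 1) hq1'
    · exact h'
  have hεH := suq_eps_H (a := a) (g := g) ε hεg hεgs
  -- generator memberships in the grading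
  have hcast : ∀ (p p' : ℤ) (x : A), p = p' → x ∈ suqHomog a g p → x ∈ suqHomog a g p' := by
    rintro p p' x rfl h; exact h
  have ha0 : a ∈ suqHomog a g 0 := by
    have e : suqMono a g (1, 0, 0) = a := by simp [suqMono]
    have h := suq_mono_mem a g (p := 0) 1 0 0 (by simp)
    rwa [e] at h
  have has0 : star a ∈ suqHomog a g 0 := by
    have e : suqMono a g (-1, 0, 0) = star a := by norm_num [suqMono]
    have h := suq_mono_mem a g (p := 0) (-1) 0 0 (by simp)
    rwa [e] at h
  have hg1 : g ∈ suqHomog a g 1 := by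
    have e : suqMono a g (0, 1, 0) = g := by simp [suqMono]
    have h := suq_mono_mem a g (p := 1) 0 1 0 (by simp)
    rwa [e] at h
  have hgs1 : star g ∈ suqHomog a g (-1) := by
    have e : suqMono a g (0, 0, 1) = star g := by simp [suqMono]
    have h := suq_mono_mem a g (p := (-1)) 0 0 1 (by simp)
    rwa [e] at h
  have hone0 : (1 : A) ∈ suqHomog a g 0 := by
    have e : suqMono a g (0, 0, 0) = 1 := by simp [suqMono]
    have h := suq_mono_mem a g (p := 0) 0 0 0 (by simp)
    rwa [e] at h
  -- Δ of generators lies in the right part of the braided tensor square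
  have hTone : Δ 1 ∈ Submodule.span ℂ (suqTset a g 0) := by
    rw [hΔ1]
    exact Submodule.subset_span ⟨0, 1, hone0, 1, hcast _ _ _ (by norm_num) hone0, rfl⟩
  have hTa : Δ a ∈ Submodule.span ℂ (suqTset a g 0) := by
    rw [hΔa]
    refine sub_mem (Submodule.subset_span ⟨0, a, ha0, a, hcast _ _ _ (by norm_num) ha0, rfl⟩)
      (Submodule.smul_mem _ _ (Submodule.subset_span
        ⟨-1, star g, hgs1, g, hcast _ _ _ (by norm_num) hg1, rfl⟩))
  have hTas : Δ (star a) ∈ Submodule.span ℂ (suqTset a g 0) := by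
    rw [hΔas]
    refine sub_mem (Submodule.subset_span ⟨0, star a, has0, star a,
        hcast _ _ _ (by norm_num) has0, rfl⟩)
      (Submodule.smul_mem _ _ (Submodule.subset_span
        ⟨1, g, hg1, star g, hcast _ _ _ (by norm_num) hgs1, rfl⟩))
  have hTg : Δ g ∈ Submodule.span ℂ (suqTset a g 1) := by
    rw [hΔg]
    exact add_mem (Submodule.subset_span ⟨1, g, hg1, a, hcast _ _ _ (by norm_num) ha0, rfl⟩)
      (Submodule.subset_span ⟨0, star a, has0, g, hcast _ _ _ (by norm_num) hg1, rfl⟩)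
  have hTgs : Δ (star g) ∈ Submodule.span ℂ (suqTset a g (-1)) := by
    rw [hΔgs]
    exact add_mem
      (Submodule.subset_span ⟨-1, star g, hgs1, star a, hcast _ _ _ (by norm_num) has0, rfl⟩)
      (Submodule.subset_span ⟨0, a, ha0, star g, hcast _ _ _ (by norm_num) hgs1, rfl⟩)
  -- the convolution identities on the generators
  have hKone1 : (LinearMap.mul' ℂ A) ((TensorProduct.map S LinearMap.id) (Δ 1)) = ε 1 • 1 := by
    rw [hΔ1]
    simp only [TensorProduct.map_tmul, LinearMap.mul'_apply, LinearMap.id_coe, id_eq]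
    rw [hS1, map_one, one_smul, mul_one]
  have hKone2 : (LinearMap.mul' ℂ A) ((TensorProduct.map LinearMap.id S) (Δ 1)) = ε 1 • 1 := by
    rw [hΔ1]
    simp only [TensorProduct.map_tmul, LinearMap.mul'_apply, LinearMap.id_coe, id_eq]
    rw [hS1, map_one, one_smul, mul_one]
  have hKa1 : (LinearMap.mul' ℂ A) ((TensorProduct.map S LinearMap.id) (Δ a)) = ε a • 1 := by
    rw [hΔa, map_sub, map_sub, map_smul, map_smul]
    simp only [TensorProduct.map_tmul, LinearMap.mul'_apply, LinearMap.id_coe, id_eq]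
    rw [hSa, hSgs, hεa, one_smul, smul_mul_assoc, smul_smul, mul_neg, mul_inv_cancel₀ hq,
      neg_smul, one_smul, sub_neg_eq_add, h1]
  have hKa2 : (LinearMap.mul' ℂ A) ((TensorProduct.map LinearMap.id S) (Δ a)) = ε a • 1 := by
    rw [hΔa, map_sub, map_sub, map_smul, map_smul]
    simp only [TensorProduct.map_tmul, LinearMap.mul'_apply, LinearMap.id_coe, id_eq]
    rw [hSa, hSg, hεa, one_smul, mul_smul_comm, smul_smul, mul_neg, neg_smul, sub_neg_eq_add,
      ← habs, h2]
  have hKas1 : (LinearMap.mul' ℂ A) ((TensorProduct.map S LinearMap.id) (Δ (star a)))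
      = ε (star a) • 1 := by
    rw [hΔas, map_sub, map_sub, map_smul, map_smul]
    simp only [TensorProduct.map_tmul, LinearMap.mul'_apply, LinearMap.id_coe, id_eq]
    rw [hSas, hSg, hεas, one_smul, smul_mul_assoc, smul_smul, mul_neg, neg_smul,
      sub_neg_eq_add, h3, ← habs, h2]
  have hKas2 : (LinearMap.mul' ℂ A) ((TensorProduct.map LinearMap.id S) (Δ (star a)))
      = ε (star a) • 1 := by
    rw [hΔas, map_sub, map_sub, map_smul, map_smul]
    simp only [TensorProduct.map_tmul, LinearMap.mul'_apply, LinearMap.id_coe, id_eq]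
    rw [hSas, hSgs, hεas, one_smul, mul_smul_comm, smul_smul, mul_neg, mul_inv_cancel₀ hq,
      neg_smul, one_smul, sub_neg_eq_add, h3, h1]
  have hKg1 : (LinearMap.mul' ℂ A) ((TensorProduct.map S LinearMap.id) (Δ g)) = ε g • 1 := by
    rw [hΔg, map_add, map_add]
    simp only [TensorProduct.map_tmul, LinearMap.mul'_apply, LinearMap.id_coe, id_eq]
    rw [hSg, hSas, hεg, zero_smul, smul_mul_assoc, h4, neg_smul, neg_add_cancel]
  have hKg2 : (LinearMap.mul' ℂ A) ((TensorProduct.map LinearMap.id S) (Δ g)) = ε g • 1 := by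
    rw [hΔg, map_add, map_add]
    simp only [TensorProduct.map_tmul, LinearMap.mul'_apply, LinearMap.id_coe, id_eq]
    rw [hSa, hSg, hεg, zero_smul, h5s, mul_smul_comm, neg_smul, add_neg_cancel]
  have hKgs1 : (LinearMap.mul' ℂ A) ((TensorProduct.map S LinearMap.id) (Δ (star g)))
      = ε (star g) • 1 := by
    rw [hΔgs, map_add, map_add]
    simp only [TensorProduct.map_tmul, LinearMap.mul'_apply, LinearMap.id_coe, id_eq]
    rw [hSgs, hSa, hεgs, zero_smul, smul_mul_assoc, h4s, smul_smul, neg_mul,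
      inv_mul_cancel₀ hq, neg_smul, one_smul, neg_add_cancel]
  have hKgs2 : (LinearMap.mul' ℂ A) ((TensorProduct.map LinearMap.id S) (Δ (star g)))
      = ε (star g) • 1 := by
    rw [hΔgs, map_add, map_add]
    simp only [TensorProduct.map_tmul, LinearMap.mul'_apply, LinearMap.id_coe, id_eq]
    rw [hSas, hSgs, hεgs, zero_smul, hgsa, mul_smul_comm, neg_smul, add_neg_cancel]
  -- "Good" elements: homogeneous, Δ lands in the graded tensor part, and both
  -- convolution identities hold
  have good_mul : ∀ (p r : ℤ) (x y : A),
      (x ∈ suqHomog a g p ∧ Δ x ∈ Submodule.span ℂ (suqTset a g p) ∧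
        (LinearMap.mul' ℂ A) ((TensorProduct.map S LinearMap.id) (Δ x)) = ε x • 1 ∧
        (LinearMap.mul' ℂ A) ((TensorProduct.map LinearMap.id S) (Δ x)) = ε x • 1) →
      (y ∈ suqHomog a g r ∧ Δ y ∈ Submodule.span ℂ (suqTset a g r) ∧
        (LinearMap.mul' ℂ A) ((TensorProduct.map S LinearMap.id) (Δ y)) = ε y • 1 ∧
        (LinearMap.mul' ℂ A) ((TensorProduct.map LinearMap.id S) (Δ y)) = ε y • 1) →
      (x * y ∈ suqHomog a g (p + r) ∧
        Δ (x * y) ∈ Submodule.span ℂ (suqTset a g (p + r)) ∧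
        (LinearMap.mul' ℂ A) ((TensorProduct.map S LinearMap.id) (Δ (x * y))) = ε (x * y) • 1 ∧
        (LinearMap.mul' ℂ A) ((TensorProduct.map LinearMap.id S) (Δ (x * y)))
          = ε (x * y) • 1) := by
    rintro p r x y ⟨hxH, hxT, hx1, hx2⟩ ⟨hyH, hyT, hy1, hy2⟩
    refine ⟨hH p r x hxH y hyH, ?_, ?_, ?_⟩
    · rw [hΔm]
      exact suq_T_mul hμ' hH p r _ hxT _ hyT
    · rw [hΔm]
      have step : ∀ v ∈ Submodule.span ℂ (suqTset a g r),
          (LinearMap.mul' ℂ A) ((TensorProduct.map S LinearMap.id) (μ (Δ x) v))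
            = ε x • ((LinearMap.mul' ℂ A) ((TensorProduct.map S LinearMap.id) v)) := by
        intro v hv
        induction hv using Submodule.span_induction with
        | mem w hw =>
          obtain ⟨r₁, v₁, hv₁, v₂, hv₂, rfl⟩ := hw
          rw [suq_left_conv hζ hμ' hSm p r₁ v₁ hv₁ v₂ (Δ x) hxT, hx1]
          simp only [TensorProduct.map_tmul, LinearMap.mul'_apply, LinearMap.id_coe, id_eq]
          rcases eq_or_ne p 0 with hp | hp
          · subst hp
            rw [zero_mul, neg_zero, zpow_zero, one_smul, mul_smul_comm, smul_mul_assoc,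
              mul_one]
          · rw [hεH p hp x hxH]
            simp
        | zero => simp
        | add u v _ _ hu hv => simp only [map_add, LinearMap.add_apply, hu, hv, smul_add]
        | smul z u _ hu =>
          simp only [map_smul, LinearMap.smul_apply, hu, smul_smul]
          rw [mul_comm]
      rw [step (Δ y) hyT, hy1, smul_smul, ← map_mul]
    · rw [hΔm]
      have step : ∀ u ∈ Submodule.span ℂ (suqTset a g p),
          (LinearMap.mul' ℂ A) ((TensorProduct.map LinearMap.id S) (μ u (Δ y)))
            = ε y • ((LinearMap.mul' ℂ A) ((TensorProduct.map LinearMap.id S) u)) := by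
        intro u hu
        induction hu using Submodule.span_induction with
        | mem w hw =>
          obtain ⟨s, u₁, hu₁, u₂, hu₂, rfl⟩ := hw
          rw [suq_right_conv hζ hμ' hSm (p - s) r u₂ hu₂ u₁ (Δ y) hyT, hy2]
          simp only [TensorProduct.map_tmul, LinearMap.mul'_apply, LinearMap.id_coe, id_eq]
          rcases eq_or_ne r 0 with hr | hr
          · subst hr
            rw [mul_zero, neg_zero, zpow_zero, one_smul, mul_smul_comm, smul_mul_assoc,
              mul_one]
          · rw [hεH r hr y hyH]
            simp
        | zero => simp
        | add u v _ _ hu hv => simp only [map_add, LinearMap.add_apply, hu, hv, smul_add]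
        | smul z u _ hu =>
          simp only [map_smul, LinearMap.smul_apply, hu, smul_smul]
          rw [mul_comm]
      rw [step (Δ x) hxT, hx2, smul_smul, mul_comm, ← map_mul]
  have good_one : (1 : A) ∈ suqHomog a g 0 ∧
      Δ 1 ∈ Submodule.span ℂ (suqTset a g 0) ∧
      (LinearMap.mul' ℂ A) ((TensorProduct.map S LinearMap.id) (Δ (1:A))) = ε 1 • 1 ∧
      (LinearMap.mul' ℂ A) ((TensorProduct.map LinearMap.id S) (Δ (1:A))) = ε 1 • 1 :=
    ⟨hone0, hTone, hKone1, hKone2⟩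
  have good_a := And.intro ha0 (And.intro hTa (And.intro hKa1 hKa2))
  have good_as := And.intro has0 (And.intro hTas (And.intro hKas1 hKas2))
  have good_g := And.intro hg1 (And.intro hTg (And.intro hKg1 hKg2))
  have good_gs := And.intro hgs1 (And.intro hTgs (And.intro hKgs1 hKgs2))
  -- powers of the generators are good
  have good_pow_a : ∀ j : ℕ, (a ^ j ∈ suqHomog a g 0 ∧
      Δ (a ^ j) ∈ Submodule.span ℂ (suqTset a g 0) ∧
      (LinearMap.mul' ℂ A) ((TensorProduct.map S LinearMap.id) (Δ (a ^ j))) = ε (a ^ j) • 1 ∧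
      (LinearMap.mul' ℂ A) ((TensorProduct.map LinearMap.id S) (Δ (a ^ j)))
        = ε (a ^ j) • 1) := by
    intro j
    induction j with
    | zero => rw [pow_zero]; exact good_one
    | succ j ih =>
      rw [pow_succ]
      have h := good_mul 0 0 _ _ ih good_a
      rwa [add_zero] at h
  have good_pow_as : ∀ j : ℕ, (star a ^ j ∈ suqHomog a g 0 ∧
      Δ (star a ^ j) ∈ Submodule.span ℂ (suqTset a g 0) ∧
      (LinearMap.mul' ℂ A) ((TensorProduct.map S LinearMap.id) (Δ (star a ^ j)))
        = ε (star a ^ j) • 1 ∧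
      (LinearMap.mul' ℂ A) ((TensorProduct.map LinearMap.id S) (Δ (star a ^ j)))
        = ε (star a ^ j) • 1) := by
    intro j
    induction j with
    | zero => rw [pow_zero]; exact good_one
    | succ j ih =>
      rw [pow_succ]
      have h := good_mul 0 0 _ _ ih good_as
      rwa [add_zero] at h
  have good_pow_g : ∀ j : ℕ, (g ^ j ∈ suqHomog a g (j : ℤ) ∧
      Δ (g ^ j) ∈ Submodule.span ℂ (suqTset a g (j : ℤ)) ∧
      (LinearMap.mul' ℂ A) ((TensorProduct.map S LinearMap.id) (Δ (g ^ j))) = ε (g ^ j) • 1 ∧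
      (LinearMap.mul' ℂ A) ((TensorProduct.map LinearMap.id S) (Δ (g ^ j)))
        = ε (g ^ j) • 1) := by
    intro j
    induction j with
    | zero =>
      rw [pow_zero]
      exact ⟨hcast _ _ _ (by norm_num) hone0, by rw [show ((0:ℕ):ℤ) = 0 by norm_num]; exact hTone,
        hKone1, hKone2⟩
    | succ j ih =>
      rw [pow_succ]
      have h := good_mul j 1 _ _ ih good_g
      rwa [show (j : ℤ) + 1 = ((j + 1 : ℕ) : ℤ) by push_cast; ring] at h
  have good_pow_gs : ∀ j : ℕ, (star g ^ j ∈ suqHomog a g (-(j : ℤ)) ∧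
      Δ (star g ^ j) ∈ Submodule.span ℂ (suqTset a g (-(j : ℤ))) ∧
      (LinearMap.mul' ℂ A) ((TensorProduct.map S LinearMap.id) (Δ (star g ^ j)))
        = ε (star g ^ j) • 1 ∧
      (LinearMap.mul' ℂ A) ((TensorProduct.map LinearMap.id S) (Δ (star g ^ j)))
        = ε (star g ^ j) • 1) := by
    intro j
    induction j with
    | zero =>
      rw [pow_zero]
      exact ⟨hcast _ _ _ (by norm_num) hone0,
        by rw [show (-((0:ℕ):ℤ)) = 0 by norm_num]; exact hTone, hKone1, hKone2⟩
    | succ j ih =>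
      rw [pow_succ]
      have h := good_mul (-(j:ℤ)) (-1) _ _ ih good_gs
      rwa [show (-(j : ℤ)) + (-1) = -((j + 1 : ℕ) : ℤ) by push_cast; ring] at h
  -- every basis monomial satisfies the convolution identities
  have good_mono : ∀ i : ℤ × ℕ × ℕ,
      (LinearMap.mul' ℂ A) ((TensorProduct.map S LinearMap.id) (Δ (suqMono a g i)))
        = ε (suqMono a g i) • 1 ∧
      (LinearMap.mul' ℂ A) ((TensorProduct.map LinearMap.id S) (Δ (suqMono a g i)))
        = ε (suqMono a g i) • 1 := by
    rintro ⟨n, m, k⟩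
    have hX : ((if 0 ≤ n then a ^ n.toNat else star a ^ (-n).toNat) ∈ suqHomog a g 0 ∧
        Δ (if 0 ≤ n then a ^ n.toNat else star a ^ (-n).toNat)
          ∈ Submodule.span ℂ (suqTset a g 0) ∧
        (LinearMap.mul' ℂ A) ((TensorProduct.map S LinearMap.id)
          (Δ (if 0 ≤ n then a ^ n.toNat else star a ^ (-n).toNat)))
          = ε (if 0 ≤ n then a ^ n.toNat else star a ^ (-n).toNat) • 1 ∧
        (LinearMap.mul' ℂ A) ((TensorProduct.map LinearMap.id S)
          (Δ (if 0 ≤ n then a ^ n.toNat else star a ^ (-n).toNat)))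
          = ε (if 0 ≤ n then a ^ n.toNat else star a ^ (-n).toNat) • 1) := by
      split
      · exact good_pow_a _
      · exact good_pow_as _
    have hXg := good_mul 0 (m:ℤ) _ _ hX (good_pow_g m)
    have hXgs := good_mul ((0:ℤ) + m) (-(k:ℤ)) _ _ hXg (good_pow_gs k)
    have e : suqMono a g (n, m, k)
        = ((if 0 ≤ n then a ^ n.toNat else star a ^ (-n).toNat) * g ^ m) * star g ^ k := rfl
    rw [e]
    exact ⟨hXgs.2.2.1, hXgs.2.2.2⟩
  -- conclude by linearity, using that the monomials span `A`
  intro x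
  have hle : (⊤ : Submodule ℂ A) ≤
      LinearMap.ker (((LinearMap.mul' ℂ A).comp (TensorProduct.map S LinearMap.id)).comp Δ
        - (ε.toLinearMap.smulRight 1)) ⊓
      LinearMap.ker (((LinearMap.mul' ℂ A).comp (TensorProduct.map LinearMap.id S)).comp Δ
        - (ε.toLinearMap.smulRight 1)) := by
    rw [← hbasis.2, Submodule.span_le]
    rintro _ ⟨i, rfl⟩
    simp only [SetLike.mem_coe, Submodule.mem_inf, LinearMap.mem_ker, LinearMap.sub_apply,
      LinearMap.comp_apply, LinearMap.smulRight_apply, AlgHom.toLinearMap_apply, sub_eq_zero]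
    exact good_mono i
  have hx := hle (Submodule.mem_top : x ∈ ⊤)
  simp only [Submodule.mem_inf, LinearMap.mem_ker, LinearMap.sub_apply,
    LinearMap.comp_apply, LinearMap.smulRight_apply, AlgHom.toLinearMap_apply,
    sub_eq_zero] at hx
  exact hx
end
end

section
/- Let ⋆ be the conjugate-linear map on 𝒜 ⊗_ℂ 𝒜 determined by ⋆(x⊗y) = ζ^{−pr}·x*⊗y* for x ∈ 𝒜_p, y ∈ 𝒜_r. Then for every a ∈ 𝒜 one has Δ(a*) = ⋆(Δ(a)); i.e. writing Δ(a) = Σ a₍₁₎⊗a₍₂₎ with homogeneous legs, Δ(a*) = Σ ζ^{−deg(a₍₁₎)·deg(a₍₂₎)}·(a₍₁₎)*⊗(a₍₂₎)*. -/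
open scoped TensorProduct

noncomputable section

section Aux

variable {A : Type*} [Ring A] [Algebra ℂ A] [StarRing A]

lemma suqMono_mem (a g : A) (i : ℤ × ℕ × ℕ) :
    suqMono a g i ∈ suqHomog a g ((i.2.1 : ℤ) - (i.2.2 : ℤ)) :=
  Submodule.subset_span ⟨i, rfl, rfl⟩

lemma suqMono_a (a g : A) : suqMono a g (1, 0, 0) = a := by simp [suqMono]
lemma suqMono_as (a g : A) : suqMono a g (-1, 0, 0) = star a := by
  norm_num [suqMono]
lemma suqMono_g (a g : A) : suqMono a g (0, 1, 0) = g := by simp [suqMono]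
lemma suqMono_gs (a g : A) : suqMono a g (0, 0, 1) = star g := by simp [suqMono]
lemma suqMono_one (a g : A) : suqMono a g (0, 0, 0) = 1 := by simp [suqMono]

lemma a_mem (a g : A) : a ∈ suqHomog a g 0 := by
  have := suqMono_mem a g (1,0,0); rwa [suqMono_a] at this
lemma as_mem (a g : A) : star a ∈ suqHomog a g 0 := by
  have := suqMono_mem a g (-1,0,0); rwa [suqMono_as] at this
lemma g_mem (a g : A) : g ∈ suqHomog a g 1 := by
  have := suqMono_mem a g (0,1,0); rwa [suqMono_g] at this
lemma gs_mem (a g : A) : star g ∈ suqHomog a g (-1) := by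
  have := suqMono_mem a g (0,0,1); rwa [suqMono_gs] at this
lemma one_mem' (a g : A) : (1 : A) ∈ suqHomog a g 0 := by
  have := suqMono_mem a g (0,0,0); rwa [suqMono_one] at this

end Aux
section Aux2
set_option linter.unusedSectionVars false

variable {A : Type*} [Ring A] [Algebra ℂ A] [StarRing A] [StarModule ℂ A]
variable {q : ℂ} {a g : A}

lemma rel_gga (hrel : SUqRel q a g) : g * star g = star g * g := hrel.2.2.1
lemma rel_ag (hrel : SUqRel q a g) : a * g = (starRingEnd ℂ q) • (g * a) := hrel.2.2.2.1
lemma rel_ags (hrel : SUqRel q a g) : a * star g = q • (star g * a) := hrel.2.2.2.2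

lemma swap_of_rel {c : ℂ} (hc : c ≠ 0) {x y : A} (h : y * x = c • (x * y)) :
    x * y = c⁻¹ • (y * x) := by
  rw [h, smul_smul, inv_mul_cancel₀ hc, one_smul]

lemma gas_swap (hrel : SUqRel q a g) : g * star a = (starRingEnd ℂ q) • (star a * g) := by
  have := congrArg star (rel_ags hrel)
  rw [star_mul, star_smul, star_mul, star_star] at this
  simpa using this

lemma gsas_swap (hrel : SUqRel q a g) : star g * star a = q • (star a * star g) := by
  have := congrArg star (rel_ag hrel)
  rw [star_mul, star_smul, star_mul] at this
  simpa using this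

lemma ga_swap (hq : q ≠ 0) (hrel : SUqRel q a g) :
    g * a = ((starRingEnd ℂ q))⁻¹ • (a * g) :=
  swap_of_rel (by simpa using hq) (rel_ag hrel)

lemma gsa_swap (hq : q ≠ 0) (hrel : SUqRel q a g) :
    star g * a = q⁻¹ • (a * star g) :=
  swap_of_rel hq (rel_ags hrel)

lemma pow_swap {c : ℂ} {x y : A} (h : x * y = c • (y * x)) :
    ∀ n : ℕ, x ^ n * y = c ^ n • (y * x ^ n) := by
  intro n
  induction n with
  | zero => simp
  | succ n ih =>
    rw [pow_succ, mul_assoc, h, mul_smul_comm, ← mul_assoc, ih, smul_mul_assoc,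
      smul_smul, mul_assoc, ← pow_succ, pow_succ c]
    ring_nf

end Aux2
section Aux3
set_option linter.unusedSectionVars false

variable {A : Type*} [Ring A] [Algebra ℂ A] [StarRing A] [StarModule ℂ A]
variable {q : ℂ} {a g : A}

lemma swap_right {c : ℂ} {x y : A} (hxy : x * y = c • (y * x)) (X : A) (n : ℕ) :
    X * x ^ n * y = c ^ n • (X * y * x ^ n) := by
  rw [mul_assoc, pow_swap hxy, mul_smul_comm, ← mul_assoc]

lemma move_a (hq : q ≠ 0) (hrel : SUqRel q a g) (X : A) (m k : ℕ) :
    X * g ^ m * (star g) ^ k * a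
      = (((starRingEnd ℂ q)⁻¹) ^ m * (q⁻¹) ^ k) • (X * a * g ^ m * (star g) ^ k) := by
  rw [swap_right (gsa_swap hq hrel) (X * g ^ m) k,
    swap_right (ga_swap hq hrel) X m, smul_mul_assoc, smul_smul, mul_comm]

lemma move_as (hrel : SUqRel q a g) (X : A) (m k : ℕ) :
    X * g ^ m * (star g) ^ k * star a
      = ((starRingEnd ℂ q) ^ m * q ^ k) • (X * star a * g ^ m * (star g) ^ k) := by
  rw [swap_right (gsas_swap hrel) (X * g ^ m) k,
    swap_right (gas_swap hrel) X m, smul_mul_assoc, smul_smul, mul_comm]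

lemma gsg_collect
    (hrel : SUqRel q a g) (X : A) (m k : ℕ) :
    X * (star g * g) * g ^ m * (star g) ^ k = X * g ^ (m + 1) * (star g) ^ (k + 1) := by
  have hc : Commute (star g) g := (rel_gga hrel).symm
  simp only [mul_assoc]
  congr 1
  rw [← mul_assoc g, ← pow_succ', ← mul_assoc, (hc.pow_right (m+1)).eq, mul_assoc, ← pow_succ']
end Aux3
section Aux4
set_option linter.unusedSectionVars false

variable {A : Type*} [Ring A] [Algebra ℂ A] [StarRing A] [StarModule ℂ A]
variable {q : ℂ} {a g : A}

lemma mono_mul_g (hrel : SUqRel q a g) (n : ℤ) (m k : ℕ) :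
    suqMono a g (n, m, k) * g = suqMono a g (n, m + 1, k) := by
  have hc : Commute (star g) g := (rel_gga hrel).symm
  simp only [suqMono, mul_assoc]
  congr 1
  rw [(hc.pow_left k).eq, ← mul_assoc, ← pow_succ]

lemma mono_mul_gs (n : ℤ) (m k : ℕ) :
    suqMono a g (n, m, k) * star g = suqMono a g (n, m, k + 1) := by
  simp only [suqMono, mul_assoc, ← pow_succ]

end Aux4
section Aux5
set_option linter.unusedSectionVars false

variable {A : Type*} [Ring A] [Algebra ℂ A] [StarRing A] [StarModule ℂ A]
variable {q : ℂ} {a g : A}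

lemma mono_mul_a_mem (hq : q ≠ 0) (hrel : SUqRel q a g) (n : ℤ) (m k : ℕ) :
    suqMono a g (n, m, k) * a ∈ suqHomog a g ((m : ℤ) - (k : ℤ)) := by
  simp only [suqMono]
  rw [move_a hq hrel]
  apply Submodule.smul_mem
  by_cases hn : 0 ≤ n
  · rw [if_pos hn]
    have e1 : suqMono a g (n + 1, m, k) = a ^ n.toNat * a * g ^ m * (star g) ^ k := by
      simp only [suqMono]
      rw [if_pos (by omega : (0:ℤ) ≤ n + 1), show (n + 1).toNat = n.toNat + 1 by omega,
        pow_succ]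
    exact e1 ▸ suqMono_mem a g (n + 1, m, k)
  · rw [if_neg hn]
    have hsa : star a * a = 1 - star g * g := eq_sub_of_add_eq hrel.1
    rw [show (-n).toNat = (-(n + 1)).toNat + 1 by omega, pow_succ,
      mul_assoc ((star a) ^ (-(n + 1)).toNat), hsa, mul_one_sub, sub_mul, sub_mul,
      gsg_collect hrel]
    have hbr : (if 0 ≤ n + 1 then a ^ (n + 1).toNat else (star a) ^ (-(n + 1)).toNat)
        = (star a) ^ (-(n + 1)).toNat := by
      by_cases h0 : n + 1 = 0
      · rw [h0]; norm_num
      · rw [if_neg (by omega)]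
    have e1 : suqMono a g (n + 1, m, k) = (star a) ^ (-(n + 1)).toNat * g ^ m * (star g) ^ k := by
      simp only [suqMono]; rw [hbr]
    have e2 : suqMono a g (n + 1, m + 1, k + 1)
        = (star a) ^ (-(n + 1)).toNat * g ^ (m + 1) * (star g) ^ (k + 1) := by
      simp only [suqMono]; rw [hbr]
    refine sub_mem (e1 ▸ suqMono_mem a g (n + 1, m, k)) ?_
    have := suqMono_mem a g (n + 1, m + 1, k + 1)
    rw [e2, show ((m + 1 : ℕ) : ℤ) - ((k + 1 : ℕ) : ℤ) = (m : ℤ) - k by push_cast; ring] at this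
    exact this

lemma mono_mul_as_mem (hrel : SUqRel q a g) (n : ℤ) (m k : ℕ) :
    suqMono a g (n, m, k) * star a ∈ suqHomog a g ((m : ℤ) - (k : ℤ)) := by
  simp only [suqMono]
  rw [move_as hrel]
  apply Submodule.smul_mem
  by_cases hn : 0 ≤ n ∧ n ≠ 0
  · obtain ⟨hn1, hn2⟩ := hn
    rw [if_pos hn1]
    have haas : a * star a = 1 - ((‖q‖ : ℂ) ^ 2) • (star g * g) :=
      eq_sub_of_add_eq hrel.2.1
    rw [show n.toNat = (n - 1).toNat + 1 by omega, pow_succ,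
      mul_assoc (a ^ (n - 1).toNat), haas, mul_sub, mul_one, mul_smul_comm, sub_mul, sub_mul,
      smul_mul_assoc, smul_mul_assoc, gsg_collect hrel]
    have e1 : suqMono a g (n - 1, m, k) = a ^ (n - 1).toNat * g ^ m * (star g) ^ k := by
      simp only [suqMono]; rw [if_pos (by omega : (0:ℤ) ≤ n - 1)]
    have e2 : suqMono a g (n - 1, m + 1, k + 1)
        = a ^ (n - 1).toNat * g ^ (m + 1) * (star g) ^ (k + 1) := by
      simp only [suqMono]; rw [if_pos (by omega : (0:ℤ) ≤ n - 1)]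
    refine sub_mem (e1 ▸ suqMono_mem a g (n - 1, m, k)) (Submodule.smul_mem _ _ ?_)
    have := suqMono_mem a g (n - 1, m + 1, k + 1)
    rw [e2, show ((m + 1 : ℕ) : ℤ) - ((k + 1 : ℕ) : ℤ) = (m : ℤ) - k by push_cast; ring] at this
    exact this
  · -- n ≤ 0 : (star a)^(-n).toNat * star a = (star a)^((-n).toNat+1)
    have hn' : n ≤ 0 := by rcases lt_or_ge n 0 with h | h; · omega
                           · have : n = 0 := by by_contra hne; exact hn ⟨h, hne⟩
                             omega
    have e1 : suqMono a g (n - 1, m, k) = (star a) ^ (-(n - 1)).toNat * g ^ m * (star g) ^ k := by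
      simp only [suqMono]; rw [if_neg (by omega : ¬ (0:ℤ) ≤ n - 1)]
    have key : (if 0 ≤ n then a ^ n.toNat else (star a) ^ (-n).toNat) * star a * g ^ m
        * (star g) ^ k = (star a) ^ (-(n - 1)).toNat * g ^ m * (star g) ^ k := by
      congr 2
      by_cases h0 : n = 0
      · subst h0; norm_num
      · rw [if_neg (by omega : ¬ (0:ℤ) ≤ n), show (-(n - 1)).toNat = (-n).toNat + 1 by omega,
          pow_succ]
    rw [key]
    exact e1 ▸ suqMono_mem a g (n - 1, m, k)

end Aux5
section Aux6
set_option linter.unusedSectionVars false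

variable {A : Type*} [Ring A] [Algebra ℂ A] [StarRing A] [StarModule ℂ A]
variable {q : ℂ} {a g : A}

lemma homog_mul_of_mono {e : ℤ} (z : A)
    (hz : ∀ i : ℤ × ℕ × ℕ, suqMono a g i * z ∈ suqHomog a g (((i.2.1 : ℤ) - i.2.2) + e))
    {p : ℤ} {x : A} (hx : x ∈ suqHomog a g p) : x * z ∈ suqHomog a g (p + e) := by
  refine Submodule.span_induction ?_ ?_ ?_ ?_ hx
  · rintro x ⟨i, hdeg, rfl⟩
    have := hz i
    rwa [hdeg] at this
  · simp
  · intro u v _ _ hu hv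
    rw [add_mul]; exact add_mem hu hv
  · intro c u _ hu
    rw [smul_mul_assoc]; exact Submodule.smul_mem _ _ hu

lemma homog_mul_a (hq : q ≠ 0) (hrel : SUqRel q a g) {p : ℤ} {x : A}
    (hx : x ∈ suqHomog a g p) : x * a ∈ suqHomog a g p := by
  have := homog_mul_of_mono (e := 0) a
    (fun i => by simpa using mono_mul_a_mem hq hrel i.1 i.2.1 i.2.2) hx
  simpa using this

lemma homog_mul_as (hrel : SUqRel q a g) {p : ℤ} {x : A}
    (hx : x ∈ suqHomog a g p) : x * star a ∈ suqHomog a g p := by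
  have := homog_mul_of_mono (e := 0) (star a)
    (fun i => by simpa using mono_mul_as_mem hrel i.1 i.2.1 i.2.2) hx
  simpa using this

lemma homog_mul_g (hrel : SUqRel q a g) {p : ℤ} {x : A}
    (hx : x ∈ suqHomog a g p) : x * g ∈ suqHomog a g (p + 1) := by
  refine homog_mul_of_mono (e := 1) g (fun i => ?_) hx
  rw [show suqMono a g i * g = suqMono a g (i.1, i.2.1 + 1, i.2.2) from
    mono_mul_g hrel i.1 i.2.1 i.2.2]
  have := suqMono_mem a g (i.1, i.2.1 + 1, i.2.2)
  rwa [show ((i.2.1 + 1 : ℕ) : ℤ) - (i.2.2 : ℤ) = ((i.2.1 : ℤ) - i.2.2) + 1 by push_cast; ring]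
    at this

lemma homog_mul_gs {p : ℤ} {x : A}
    (hx : x ∈ suqHomog a g p) : x * star g ∈ suqHomog a g (p - 1) := by
  have h := homog_mul_of_mono (e := -1) (star g) (fun i => ?_) hx
  · rwa [show p + (-1) = p - 1 by ring] at h
  rw [show suqMono a g i * star g = suqMono a g (i.1, i.2.1, i.2.2 + 1) from
    mono_mul_gs i.1 i.2.1 i.2.2]
  have := suqMono_mem a g (i.1, i.2.1, i.2.2 + 1)
  rwa [show (i.2.1 : ℤ) - ((i.2.2 + 1 : ℕ) : ℤ) = ((i.2.1 : ℤ) - i.2.2) + (-1) by push_cast; ring]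
    at this

end Aux6
section Aux7
set_option linter.unusedSectionVars false

variable {A : Type*} [Ring A] [Algebra ℂ A] [StarRing A] [StarModule ℂ A]
variable {q : ℂ} {a g : A}

lemma homog_mul_apow (hq : q ≠ 0) (hrel : SUqRel q a g) {p : ℤ} {x : A}
    (hx : x ∈ suqHomog a g p) (j : ℕ) : x * a ^ j ∈ suqHomog a g p := by
  induction j with
  | zero => simpa using hx
  | succ j ih => rw [pow_succ, ← mul_assoc]; exact homog_mul_a hq hrel ih

lemma homog_mul_aspow (hrel : SUqRel q a g) {p : ℤ} {x : A}
    (hx : x ∈ suqHomog a g p) (j : ℕ) : x * (star a) ^ j ∈ suqHomog a g p := by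
  induction j with
  | zero => simpa using hx
  | succ j ih => rw [pow_succ, ← mul_assoc]; exact homog_mul_as hrel ih

lemma homog_mul_gpow (hrel : SUqRel q a g) {p : ℤ} {x : A}
    (hx : x ∈ suqHomog a g p) (j : ℕ) : x * g ^ j ∈ suqHomog a g (p + j) := by
  induction j with
  | zero => simpa using hx
  | succ j ih =>
    rw [pow_succ, ← mul_assoc]
    have := homog_mul_g hrel ih
    rwa [show (p + (j : ℤ)) + 1 = p + ((j : ℕ) + 1 : ℕ) by push_cast; ring] at this

lemma homog_mul_gspow {p : ℤ} {x : A}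
    (hx : x ∈ suqHomog a g p) (j : ℕ) : x * (star g) ^ j ∈ suqHomog a g (p - j) := by
  induction j with
  | zero => simpa using hx
  | succ j ih =>
    rw [pow_succ, ← mul_assoc]
    have := homog_mul_gs ih
    rwa [show (p - (j : ℤ)) - 1 = p - ((j : ℕ) + 1 : ℕ) by push_cast; ring] at this

lemma homog_mul_mono (hq : q ≠ 0) (hrel : SUqRel q a g) {p : ℤ} {x : A}
    (hx : x ∈ suqHomog a g p) (i : ℤ × ℕ × ℕ) :
    x * suqMono a g i ∈ suqHomog a g (p + ((i.2.1 : ℤ) - i.2.2)) := by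
  obtain ⟨n, m, k⟩ := i
  have h1 : x * (if 0 ≤ n then a ^ n.toNat else (star a) ^ (-n).toNat) ∈ suqHomog a g p := by
    by_cases hn : 0 ≤ n
    · rw [if_pos hn]; exact homog_mul_apow hq hrel hx n.toNat
    · rw [if_neg hn]; exact homog_mul_aspow hrel hx (-n).toNat
  have h2 := homog_mul_gspow (homog_mul_gpow hrel h1 m) k
  rw [show suqMono a g (n, m, k)
      = (if 0 ≤ n then a ^ n.toNat else (star a) ^ (-n).toNat) * g ^ m * (star g) ^ k from rfl,
    ← mul_assoc, ← mul_assoc]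
  rwa [show (p + (m : ℤ)) - (k : ℤ) = p + ((m : ℤ) - (k : ℤ)) by ring] at h2

lemma homog_mul (hq : q ≠ 0) (hrel : SUqRel q a g) {p r : ℤ} {x y : A}
    (hx : x ∈ suqHomog a g p) (hy : y ∈ suqHomog a g r) : x * y ∈ suqHomog a g (p + r) := by
  refine Submodule.span_induction ?_ ?_ ?_ ?_ hy
  · rintro y ⟨i, hdeg, rfl⟩
    have := homog_mul_mono hq hrel hx i
    rwa [hdeg] at this
  · simp
  · intro u v _ _ hu hv
    rw [mul_add]; exact add_mem hu hv
  · intro c u _ hu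
    rw [mul_smul_comm]; exact Submodule.smul_mem _ _ hu

lemma star_mono_eq (a g : A) (n : ℤ) (m k : ℕ) :
    star (suqMono a g (n, m, k)) = suqMono a g (0, k, m) * suqMono a g (-n, 0, 0) := by
  rcases lt_trichotomy n 0 with h | h | h
  · rw [show suqMono a g (n, m, k) = (star a) ^ (-n).toNat * g ^ m * (star g) ^ k by
      simp [suqMono, if_neg (not_le.mpr h)]]
    rw [show suqMono a g (-n, 0, 0) = a ^ (-n).toNat by
      simp only [suqMono, pow_zero, mul_one]; rw [if_pos (by omega : (0:ℤ) ≤ -n)]]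
    rw [show suqMono a g (0, k, m) = g ^ k * (star g) ^ m by simp [suqMono]]
    simp only [star_mul, star_pow, star_star, mul_assoc]
  · subst h
    simp [suqMono, star_mul, star_pow, mul_assoc]
  · rw [show suqMono a g (n, m, k) = a ^ n.toNat * g ^ m * (star g) ^ k by
      simp [suqMono, if_pos (le_of_lt h)]]
    rw [show suqMono a g (-n, 0, 0) = (star a) ^ n.toNat by
      simp only [suqMono, pow_zero, mul_one]
      rw [if_neg (by omega : ¬ (0:ℤ) ≤ -n), show (-(-n)).toNat = n.toNat by omega]]
    rw [show suqMono a g (0, k, m) = g ^ k * (star g) ^ m by simp [suqMono]]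
    simp only [star_mul, star_pow, star_star, mul_assoc]

lemma star_homog (hq : q ≠ 0) (hrel : SUqRel q a g) {p : ℤ} {x : A}
    (hx : x ∈ suqHomog a g p) : star x ∈ suqHomog a g (-p) := by
  refine Submodule.span_induction ?_ ?_ ?_ ?_ hx
  · rintro x ⟨⟨n, m, k⟩, hdeg, rfl⟩
    rw [star_mono_eq]
    have := homog_mul_mono hq hrel (suqMono_mem a g (0, k, m)) (-n, 0, 0)
    simp only at this hdeg
    rwa [show ((k : ℤ) - m) + (((0:ℕ):ℤ) - ((0:ℕ):ℤ)) = -((m:ℤ) - k) by push_cast; ring,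
      hdeg] at this
  · simp
  · intro u v _ _ hu hv
    rw [star_add]; exact add_mem hu hv
  · intro c u _ hu
    rw [star_smul]; exact Submodule.smul_mem _ _ hu

end Aux7
section Aux8
set_option linter.unusedSectionVars false

variable {A : Type*} [Ring A] [Algebra ℂ A] [StarRing A] [StarModule ℂ A]
variable {q : ℂ} {a g : A}

lemma tmul_mem_homogSpan (hbasis : SUqBasis a g) (u : A ⊗[ℂ] A) :
    u ∈ Submodule.span ℂ {t : A ⊗[ℂ] A | ∃ (p r : ℤ) (x y : A),
      x ∈ suqHomog a g p ∧ y ∈ suqHomog a g r ∧ t = x ⊗ₜ[ℂ] y} := by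
  set T := Submodule.span ℂ {t : A ⊗[ℂ] A | ∃ (p r : ℤ) (x y : A),
      x ∈ suqHomog a g p ∧ y ∈ suqHomog a g r ∧ t = x ⊗ₜ[ℂ] y} with hT
  have key : ∀ x y : A, x ⊗ₜ[ℂ] y ∈ T := by
    intro x y
    have hx : x ∈ Submodule.span ℂ (Set.range (suqMono a g)) := by
      rw [hbasis.2]; trivial
    refine Submodule.span_induction ?_ ?_ ?_ ?_ hx
    · rintro x ⟨i, rfl⟩
      have hy : y ∈ Submodule.span ℂ (Set.range (suqMono a g)) := by
        rw [hbasis.2]; trivial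
      refine Submodule.span_induction ?_ ?_ ?_ ?_ hy
      · rintro y ⟨j, rfl⟩
        exact Submodule.subset_span ⟨_, _, _, _, suqMono_mem a g i, suqMono_mem a g j, rfl⟩
      · rw [TensorProduct.tmul_zero]; exact zero_mem T
      · intro u v _ _ hu hv
        rw [TensorProduct.tmul_add]; exact add_mem hu hv
      · intro c u _ hu
        rw [TensorProduct.tmul_smul]; exact Submodule.smul_mem _ _ hu
        
    · rw [TensorProduct.zero_tmul]; exact zero_mem T
    · intro u v _ _ hu hv
      rw [TensorProduct.add_tmul]; exact add_mem hu hv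
    · intro c u _ hu
      rw [← TensorProduct.smul_tmul']; exact Submodule.smul_mem _ _ hu
  induction u with
  | zero => exact zero_mem T
  | tmul x y => exact key x y
  | add u v hu hv => exact add_mem hu hv

lemma st_mu_homog (hq : q ≠ 0) (hrel : SUqRel q a g)
    (μ : A ⊗[ℂ] A →ₗ[ℂ] A ⊗[ℂ] A →ₗ[ℂ] A ⊗[ℂ] A) (hμ : SUqBraidedMul q a g μ)
    (st : A ⊗[ℂ] A →ₗ⋆[ℂ] A ⊗[ℂ] A)
    (hst : ∀ (p r : ℤ), ∀ x ∈ suqHomog a g p, ∀ y ∈ suqHomog a g r,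
      st (x ⊗ₜ[ℂ] y) = ((q / starRingEnd ℂ q) ^ (-(p * r))) • ((star x) ⊗ₜ[ℂ] (star y)))
    {p r s t : ℤ} {x y z w : A} (hx : x ∈ suqHomog a g p) (hy : y ∈ suqHomog a g r)
    (hz : z ∈ suqHomog a g s) (hw : w ∈ suqHomog a g t) :
    st (μ (x ⊗ₜ[ℂ] y) (z ⊗ₜ[ℂ] w)) = μ (st (z ⊗ₜ[ℂ] w)) (st (x ⊗ₜ[ℂ] y)) := by
  have hqc : (starRingEnd ℂ) q ≠ 0 := by simpa using hq
  have hζ : (q / starRingEnd ℂ q) ≠ 0 := div_ne_zero hq hqc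
  rw [hμ x w r s y hy z hz, LinearMap.map_smulₛₗ,
    hst (p + s) (r + t) (x * z) (homog_mul hq hrel hx hz) (y * w) (homog_mul hq hrel hy hw),
    hst s t z hz w hw, hst p r x hx y hy]
  simp only [map_smul, LinearMap.smul_apply]
  rw [hμ (star z) (star y) (-t) (-p) (star w) (star_homog hq hrel hw) (star x)
      (star_homog hq hrel hx),
    star_mul, star_mul, smul_smul, smul_smul, smul_smul]
  congr 1
  rw [map_zpow₀, map_div₀, starRingEnd_self_apply,
    show (starRingEnd ℂ) q / q = (q / (starRingEnd ℂ) q)⁻¹ from (inv_div _ _).symm,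
    inv_zpow, ← zpow_neg, neg_neg, ← zpow_add₀ hζ, ← zpow_add₀ hζ, ← zpow_add₀ hζ]
  congr 1
  ring

end Aux8
section Aux9
set_option linter.unusedSectionVars false

variable {A : Type*} [Ring A] [Algebra ℂ A] [StarRing A] [StarModule ℂ A]
variable {q : ℂ} {a g : A}

lemma st_mu (hq : q ≠ 0) (hrel : SUqRel q a g) (hbasis : SUqBasis a g)
    (μ : A ⊗[ℂ] A →ₗ[ℂ] A ⊗[ℂ] A →ₗ[ℂ] A ⊗[ℂ] A) (hμ : SUqBraidedMul q a g μ)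
    (st : A ⊗[ℂ] A →ₗ⋆[ℂ] A ⊗[ℂ] A)
    (hst : ∀ (p r : ℤ), ∀ x ∈ suqHomog a g p, ∀ y ∈ suqHomog a g r,
      st (x ⊗ₜ[ℂ] y) = ((q / starRingEnd ℂ q) ^ (-(p * r))) • ((star x) ⊗ₜ[ℂ] (star y)))
    (u v : A ⊗[ℂ] A) : st (μ u v) = μ (st v) (st u) := by
  have L1 : ∀ {p r : ℤ} {x y : A}, x ∈ suqHomog a g p → y ∈ suqHomog a g r →
      ∀ v : A ⊗[ℂ] A, st (μ (x ⊗ₜ[ℂ] y) v) = μ (st v) (st (x ⊗ₜ[ℂ] y)) := by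
    intro p r x y hx hy v
    refine Submodule.span_induction ?_ ?_ ?_ ?_ (tmul_mem_homogSpan hbasis v)
    · rintro v ⟨s, t, z, w, hz, hw, rfl⟩
      exact st_mu_homog hq hrel μ hμ st hst hx hy hz hw
    · simp
    · intro u' v' _ _ h1 h2
      simp only [map_add, LinearMap.add_apply]
      rw [h1, h2]
    · intro c u' _ h1
      simp only [map_smulₛₗ, LinearMap.smul_apply, RingHom.id_apply]
      rw [h1]
  refine Submodule.span_induction ?_ ?_ ?_ ?_ (tmul_mem_homogSpan hbasis u)
  · rintro u' ⟨p, r, x, y, hx, hy, rfl⟩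
    exact L1 hx hy v
  · simp
  · intro u' v' _ _ h1 h2
    simp only [map_add, LinearMap.add_apply]
    rw [h1, h2]
  · intro c u' _ h1
    simp only [map_smulₛₗ, LinearMap.smul_apply, RingHom.id_apply]
    rw [h1]

end Aux9
/-- Let `⋆` be the conjugate-linear map on `𝒜 ⊗[ℂ] 𝒜` determined by
`⋆(x⊗y) = ζ^{-pr}·x*⊗y*` for `x ∈ 𝒜_p`, `y ∈ 𝒜_r`. Then `Δ(a*) = ⋆(Δ(a))` for all
`a ∈ 𝒜`. -/
theorem suq_comul_star {A : Type*} [Ring A] [Algebra ℂ A] [StarRing A] [StarModule ℂ A]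
    (q : ℂ) (hq0 : 0 < ‖q‖) (hq1 : ‖q‖ < 1)
    (a g : A) (hrel : SUqRel q a g) (hbasis : SUqBasis a g)
    (μ : A ⊗[ℂ] A →ₗ[ℂ] A ⊗[ℂ] A →ₗ[ℂ] A ⊗[ℂ] A) (hμ : SUqBraidedMul q a g μ)
    (Δ : A →ₗ[ℂ] A ⊗[ℂ] A) (hΔ : SUqComul q a g μ Δ)
    (st : A ⊗[ℂ] A →ₗ⋆[ℂ] A ⊗[ℂ] A)
    (hst : ∀ (p r : ℤ), ∀ x ∈ suqHomog a g p, ∀ y ∈ suqHomog a g r,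
      st (x ⊗ₜ[ℂ] y) = ((q / starRingEnd ℂ q) ^ (-(p * r))) • ((star x) ⊗ₜ[ℂ] (star y))) :
    ∀ x : A, Δ (star x) = st (Δ x) := by
  obtain ⟨hΔ1, hΔmul, hΔa, hΔg, hΔas, hΔgs⟩ := hΔ
  have hq : q ≠ 0 := by
    intro h; rw [h] at hq0; simp at hq0
  have hqc : (starRingEnd ℂ) q ≠ 0 := by simpa using hq
  have hfld : (starRingEnd ℂ) q * (q / (starRingEnd ℂ) q) = q := by field_simp
  have P1 : Δ (star (1 : A)) = st (Δ 1) := by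
    rw [star_one, hΔ1, hst 0 0 1 (one_mem' a g) 1 (one_mem' a g)]
    norm_num
  have Pa : Δ (star a) = st (Δ a) := by
    rw [hΔas, hΔa, map_sub, LinearMap.map_smulₛₗ, hst 0 0 a (a_mem a g) a (a_mem a g),
      hst (-1) 1 (star g) (gs_mem a g) g (g_mem a g)]
    norm_num [star_star, smul_smul, hfld]
  have Pas : Δ (star (star a)) = st (Δ (star a)) := by
    rw [star_star, hΔa, hΔas, map_sub, LinearMap.map_smulₛₗ,
      hst 0 0 (star a) (as_mem a g) (star a) (as_mem a g),
      hst 1 (-1) g (g_mem a g) (star g) (gs_mem a g)]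
    norm_num [star_star, smul_smul, hfld]
  have Pg : Δ (star g) = st (Δ g) := by
    rw [hΔgs, hΔg, map_add, hst 1 0 g (g_mem a g) a (a_mem a g),
      hst 0 1 (star a) (as_mem a g) g (g_mem a g)]
    norm_num
  have Pgs : Δ (star (star g)) = st (Δ (star g)) := by
    rw [star_star, hΔg, hΔgs, map_add, hst (-1) 0 (star g) (gs_mem a g) (star a) (as_mem a g),
      hst 0 (-1) a (a_mem a g) (star g) (gs_mem a g)]
    norm_num [star_star]
  have Pmul : ∀ x y : A, Δ (star x) = st (Δ x) → Δ (star y) = st (Δ y) →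
      Δ (star (x * y)) = st (Δ (x * y)) := by
    intro x y hx hy
    rw [star_mul, hΔmul, hx, hy, hΔmul, st_mu hq hrel hbasis μ hμ st hst]
  have Ppow : ∀ z : A, Δ (star z) = st (Δ z) → ∀ n : ℕ, Δ (star (z ^ n)) = st (Δ (z ^ n)) := by
    intro z hz n
    induction n with
    | zero => rw [pow_zero]; exact P1
    | succ n ih => rw [pow_succ]; exact Pmul _ _ ih hz
  have Pmono : ∀ i : ℤ × ℕ × ℕ, Δ (star (suqMono a g i)) = st (Δ (suqMono a g i)) := by
    rintro ⟨n, m, k⟩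
    have hB : Δ (star ((if 0 ≤ n then a ^ n.toNat else (star a) ^ (-n).toNat)))
        = st (Δ ((if 0 ≤ n then a ^ n.toNat else (star a) ^ (-n).toNat))) := by
      split
      · exact Ppow a Pa _
      · exact Ppow (star a) Pas _
    exact Pmul _ _ (Pmul _ _ hB (Ppow g Pg m)) (Ppow (star g) Pgs k)
  intro x
  have hx : x ∈ Submodule.span ℂ (Set.range (suqMono a g)) := by rw [hbasis.2]; trivial
  refine Submodule.span_induction ?_ ?_ ?_ ?_ hx
  · rintro x ⟨i, rfl⟩; exact Pmono i
  · simp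
  · intro u v _ _ hu hv
    rw [star_add, map_add, map_add, map_add, hu, hv]
  · intro c u _ hu
    rw [star_smul, map_smul, map_smul, LinearMap.map_smulₛₗ, hu, starRingEnd_apply]
end
end
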